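/- Suppose w ∈ G(m, p, n) is an element whose underlying permutation has a single cycle, or has exactly two cycles and these two cycles have nonzero weights that sum to 0 in ℤ/mℤ. Then [id, w]_{cdf} = [id, w]_{ℓ_R}. -/

import Mathlib

open Equiv Finset
@[ext]
structure GW (m n : ℕ) where
  perm : Equiv.Perm (Fin n)
  wt : Fin n → ZMod m
namespace GW
variable {m n : ℕ}
instance : Mul (GW m n) :=
  ⟨fun x y => ⟨x.perm * y.perm, fun i => x.wt i + y.wt (x.perm⁻¹ i)⟩⟩
instance : One (GW m n) := ⟨⟨1, 0⟩⟩
instance : Inv (GW m n) := ⟨fun x => ⟨x.perm⁻¹, fun i => -x.wt (x.perm i)⟩⟩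
@[simp] theorem mul_perm (x y : GW m n) : (x * y).perm = x.perm * y.perm := rfl
@[simp] theorem mul_wt (x y : GW m n) (i : Fin n) :
    (x * y).wt i = x.wt i + y.wt (x.perm⁻¹ i) := rfl
@[simp] theorem one_perm : (1 : GW m n).perm = 1 := rfl
@[simp] theorem one_wt (i : Fin n) : (1 : GW m n).wt i = 0 := rfl
@[simp] theorem inv_perm (x : GW m n) : (x⁻¹).perm = x.perm⁻¹ := rfl
@[simp] theorem inv_wt (x : GW m n) (i : Fin n) : (x⁻¹).wt i = -x.wt (x.perm i) := rfl
private theorem gw_mul_assoc (a b c : GW m n) : a * b * c = a * (b * c) := by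
  ext i
  · simp [mul_assoc]
  · simp [mul_inv_rev, add_assoc]
private theorem gw_one_mul (a : GW m n) : 1 * a = a := by ext i <;> simp
private theorem gw_mul_one (a : GW m n) : a * 1 = a := by ext i <;> simp
private theorem gw_inv_mul_cancel (a : GW m n) : a⁻¹ * a = 1 := by ext i <;> simp
instance : Group (GW m n) where
  mul := (· * ·)
  one := 1
  inv := Inv.inv
  mul_assoc := gw_mul_assoc
  one_mul := gw_one_mul
  mul_one := gw_mul_one
  inv_mul_cancel := gw_inv_mul_cancel
def cycleOf (w : GW m n) (i : Fin n) : Finset (Fin n) :=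
  Finset.univ.filter fun j => w.perm.SameCycle i j
def cycles (w : GW m n) : Finset (Finset (Fin n)) :=
  Finset.univ.image fun i => w.cycleOf i
def cycWt (w : GW m n) (C : Finset (Fin n)) : ZMod m := ∑ i ∈ C, w.wt i
def numCycles (w : GW m n) : ℕ := (cycles w).card
def c0 (w : GW m n) : ℕ := ((cycles w).filter fun C => cycWt w C = 0).card
def codimfix (w : GW m n) : ℕ := n - c0 w
def wtTot (w : GW m n) : ZMod m := ∑ i, w.wt i

-- NEW PIECES BELOW --

/-- The base relation on cycles of `w` induced by `u`: two cycles of `w` are related if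
some cycle of `u` meets both of them. -/
def piRelBase (u w : GW m n) (C₁ C₂ : Finset (Fin n)) : Prop :=
  C₁ ∈ cycles w ∧ C₂ ∈ cycles w ∧ ∃ D ∈ cycles u, (D ∩ C₁).Nonempty ∧ (D ∩ C₂).Nonempty

/-- The equivalence relation on the cycles of `w` generated by `piRelBase`. -/
def piRel (u w : GW m n) : Finset (Fin n) → Finset (Fin n) → Prop :=
  Relation.EqvGen (piRelBase u w)

open Classical in
/-- The part of the partition `Π_u(w)` containing the cycle `C` of `w`. -/
noncomputable def piPart (u w : GW m n) (C : Finset (Fin n)) : Finset (Finset (Fin n)) :=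
  (cycles w).filter fun C' => piRel u w C C'

/-- The set partition `Π_u(w)` of the cycles of `w`, as the set of its parts. -/
noncomputable def piParts (u w : GW m n) : Finset (Finset (Finset (Fin n))) :=
  (cycles w).image fun C => piPart u w C

/-- The weight of a collection `B` of cycles: the sum of the weights of its cycles. -/
def partWt (w : GW m n) (B : Finset (Finset (Fin n))) : ZMod m :=
  ∑ C ∈ B, cycWt w C

open Classical in
/-- The number of parts of `Π_u(w)` of nonzero total weight. -/
noncomputable def piPartsNonzeroWt (u w : GW m n) : ℕ :=
  ((piParts u w).filter fun B => partWt w B ≠ 0).card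

/-- The support of a collection of cycles: the union of the cycles' underlying sets. -/
def supp (B : Finset (Finset (Fin n))) : Finset (Fin n) := B.sup id

/-- Restriction of a permutation to an invariant set `A` (junk value `1` if `A` is
not invariant): it agrees with `σ` on `A` and is the identity off `A`. -/
noncomputable def restrictPerm (σ : Equiv.Perm (Fin n)) (A : Finset (Fin n)) :
    Equiv.Perm (Fin n) :=
  if h : ∀ i, σ i ∈ A ↔ i ∈ A then
    { toFun := fun i => if i ∈ A then σ i else i
      invFun := fun i => if i ∈ A then σ.symm i else i
      left_inv := by
        intro i
        by_cases hi : i ∈ A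
        · simp [hi, (h i).mpr hi]
        · simp [hi]
      right_inv := by
        intro j
        by_cases hj : j ∈ A
        · have hs : σ.symm j ∈ A := by
            have h2 := h (σ.symm j)
            rw [Equiv.apply_symm_apply] at h2
            exact h2.mp hj
          simp [hj, hs]
        · simp [hj] }
  else 1


/-- The restriction `x|_A` of `x` to a subset `A` of `{1,…,n}` (stabilized by `x`):
it agrees with `x` on `A` and acts as the identity, with weight `0`, off `A`. -/
noncomputable def restrict (x : GW m n) (A : Finset (Fin n)) : GW m n :=
  ⟨restrictPerm x.perm A, fun i => if i ∈ A then x.wt i else 0⟩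

/-- The cycles of `x` contained in `A`; for `x = y|_A` this gives the cycles of the
restriction of `y` to `A`, viewed as an element of `G(m,1,#A)`. -/
def cyclesIn (x : GW m n) (A : Finset (Fin n)) : Finset (Finset (Fin n)) :=
  (cycles x).filter fun C => C ⊆ A

/-- The monomial matrix representing `w`: the nonzero entry in column `j` sits in row
`w.perm j` and equals `ζ^(a_(w.perm j))`, where `ζ = exp(2πi/m)`. -/
noncomputable def toMatrix (w : GW m n) : Matrix (Fin n) (Fin n) ℂ :=
  Matrix.of fun i j =>
    if w.perm j = i then Complex.exp (2 * Real.pi * Complex.I * ((w.wt i).val : ℂ) / (m : ℂ))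
    else 0

/-- `S` (a set of cycles of `w`) can be partitioned into singletons whose weight is
`0 (mod p)` and pairs of cycles whose weights sum to `0` in `ℤ/mℤ`; encoded by an
involution pairing up the cycles. -/
def PairedUp (p : ℕ) (hpm : p ∣ m) (w : GW m n) (S : Finset (Finset (Fin n))) : Prop :=
  ∃ π : {C // C ∈ S} → {C // C ∈ S}, Function.Involutive π ∧
    (∀ C, π C = C → ZMod.castHom hpm (ZMod p) (cycWt w C.1) = 0) ∧
    (∀ C, π C ≠ C → cycWt w C.1 + cycWt w (π C).1 = 0)

/-- Membership in `G(m,p,n)`: the total weight is `0 (mod p)`. -/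
def Gmem (p : ℕ) (hpm : p ∣ m) (w : GW m n) : Prop :=
  ZMod.castHom hpm (ZMod p) (wtTot w) = 0

/-- A reflection of `G(m,p,n)`: an element of the group whose fixed space has codimension 1. -/
def IsRefl (p : ℕ) (hpm : p ∣ m) (t : GW m n) : Prop :=
  Gmem p hpm t ∧ codimfix t = 1

/-- The reflection length of `w` with respect to the reflections of `G(m,p,n)`. -/
noncomputable def lR (p : ℕ) (hpm : p ∣ m) (w : GW m n) : ℕ :=
  sInf {k | ∃ l : List (GW m n), (∀ t ∈ l, IsRefl p hpm t) ∧ l.length = k ∧ l.prod = w}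

/-- The order `≤_f` determined by a subadditive function `f`. -/
def leF (f : GW m n → ℕ) (x y : GW m n) : Prop := f x + f (x⁻¹ * y) = f y

/-- The interval `[id, w]_f` inside the poset `(G(m,p,n), ≤_f)`. -/
def interval (p : ℕ) (hpm : p ∣ m) (f : GW m n → ℕ) (w : GW m n) : Set (GW m n) :=
  {u | Gmem p hpm u ∧ leF f u w}

/-- A vector `v ∈ ℂⁿ` is regular for `G(m,p,n)` if it is fixed by no reflection. -/
def IsRegularVec (p : ℕ) (hpm : p ∣ m) (v : Fin n → ℂ) : Prop :=
  ∀ t : GW m n, IsRefl p hpm t → (toMatrix t).mulVec v ≠ v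

/-- An element `w ∈ G(m,p,n)` is regular if it has an eigenvector that is a regular vector. -/
def IsRegularElt (p : ℕ) (hpm : p ∣ m) (w : GW m n) : Prop :=
  ∃ v : Fin n → ℂ, v ≠ 0 ∧ (∃ c : ℂ, (toMatrix w).mulVec v = c • v) ∧ IsRegularVec p hpm v

end GW


-- ===== AUXILIARY DEVELOPMENT =====

namespace PermAux
variable {n : ℕ}

/-- The cycle of `i` under `σ`, as a finset. -/
def cset (σ : Equiv.Perm (Fin n)) (i : Fin n) : Finset (Fin n) :=
  Finset.univ.filter fun j => σ.SameCycle i j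

variable {σ : Equiv.Perm (Fin n)} {i j k b : Fin n}

theorem mem_cset : j ∈ cset σ i ↔ σ.SameCycle i j := by simp [cset]

theorem self_mem_cset : i ∈ cset σ i := mem_cset.2 (Equiv.Perm.SameCycle.refl _ _)

theorem cset_eq_of_sameCycle (h : σ.SameCycle i j) : cset σ i = cset σ j := by
  ext b; simp only [mem_cset]
  exact ⟨fun hb => h.symm.trans hb, fun hb => h.trans hb⟩

theorem apply_mem_cset (hk : k ∈ cset σ i) : σ k ∈ cset σ i := by
  rw [mem_cset] at hk ⊢
  exact hk.trans (Equiv.Perm.sameCycle_apply_right.2 (Equiv.Perm.SameCycle.refl _ _))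

theorem pow_apply_mem_cset (t : ℕ) (hk : k ∈ cset σ i) : (σ ^ t) k ∈ cset σ i := by
  induction t with
  | zero => simpa using hk
  | succ t ih => rw [pow_succ', Equiv.Perm.mul_apply]; exact apply_mem_cset ih

/-- A finset closed under `σ` contains the whole cycle of any of its members. -/
theorem cset_subset_of_stable {S : Finset (Fin n)} (hS : ∀ k ∈ S, σ k ∈ S)
    (hi : i ∈ S) : cset σ i ⊆ S := by
  intro b hb
  rw [mem_cset] at hb
  obtain ⟨t, -, -, ht⟩ := hb.exists_pow_eq''
  subst ht
  clear hb
  induction t with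
  | zero => simpa using hi
  | succ t ih => rw [pow_succ', Equiv.Perm.mul_apply]; exact hS _ ih

/-- Minimal positive power representation of an element of a cycle. -/
theorem minrep (h : σ.SameCycle i b) :
    ∃ t : ℕ, 0 < t ∧ (σ ^ t) i = b ∧
      ∀ s, 0 < s → s < t → (σ ^ s) i ≠ b ∧ (σ ^ s) i ≠ i := by
  have hne : ∃ t : ℕ, 0 < t ∧ (σ ^ t) i = b := by
    obtain ⟨t, ht, -, h1⟩ := h.exists_pow_eq''
    exact ⟨t, ht, h1⟩
  classical
  let t := Nat.find hne
  obtain ⟨ht0, htb⟩ := Nat.find_spec hne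
  refine ⟨t, ht0, htb, fun s hs hst => ?_⟩
  constructor
  · intro hsb
    exact Nat.find_min hne hst ⟨hs, hsb⟩
  · intro hsi
    have h2 : (σ ^ (t - s)) i = b := by
      have : (σ ^ (t - s)) ((σ ^ s) i) = b := by
        rw [← Equiv.Perm.mul_apply, ← pow_add, Nat.sub_add_cancel hst.le]
        exact htb
      rwa [hsi] at this
    have : ¬(0 < t - s ∧ (σ ^ (t - s)) i = b) := Nat.find_min hne (by omega)
    exact this ⟨by omega, h2⟩

end PermAux

namespace PermAux
variable {n : ℕ} {σ : Equiv.Perm (Fin n)} {i j k b : Fin n}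

theorem walk (t : ℕ) (ht : 0 < t) (k : Fin n)
    (havoid : ∀ s, 0 < s → s < t → (σ ^ s) k ≠ i ∧ (σ ^ s) k ≠ j) :
    ((σ * Equiv.swap i j) ^ t) (Equiv.swap i j k) = (σ ^ t) k := by
  induction t, ht using Nat.le_induction with
  | base =>
    simp [Equiv.Perm.mul_apply]
  | succ t ht ih =>
    have h1 : ((σ * Equiv.swap i j) ^ t) (Equiv.swap i j k) = (σ ^ t) k :=
      ih fun s hs hst => havoid s hs (by omega)
    rw [pow_succ', Equiv.Perm.mul_apply, h1, Equiv.Perm.mul_apply]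
    have h2 := havoid t ht (by omega)
    rw [Equiv.swap_apply_of_ne_of_ne h2.1 h2.2, ← Equiv.Perm.mul_apply, ← pow_succ']

theorem sc_of_pow {τ : Equiv.Perm (Fin n)} {t : ℕ} (h : (τ ^ t) k = b) : τ.SameCycle k b :=
  ⟨(t : ℤ), by rw [zpow_natCast]; exact h⟩

theorem out (hk : ¬ σ.SameCycle k i) (hk' : ¬ σ.SameCycle k j) :
    cset (σ * Equiv.swap i j) k = cset σ k := by
  have hki : k ≠ i := fun h => hk (h ▸ Equiv.Perm.SameCycle.refl _ _)
  have hkj : k ≠ j := fun h => hk' (h ▸ Equiv.Perm.SameCycle.refl _ _)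
  apply Finset.Subset.antisymm
  · apply cset_subset_of_stable _ self_mem_cset
    intro b hb
    have hbi : b ≠ i := fun h => hk (mem_cset.1 (h ▸ hb))
    have hbj : b ≠ j := fun h => hk' (mem_cset.1 (h ▸ hb))
    rw [Equiv.Perm.mul_apply, Equiv.swap_apply_of_ne_of_ne hbi hbj]
    exact apply_mem_cset hb
  · intro b hb
    obtain ⟨t, ht0, htb, hmin⟩ := minrep (mem_cset.1 hb)
    have hw : ((σ * Equiv.swap i j) ^ t) (Equiv.swap i j k) = (σ ^ t) k := by
      apply walk t ht0
      intro s hs hst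
      have hmem : (σ ^ s) k ∈ cset σ k := pow_apply_mem_cset s self_mem_cset
      constructor
      · exact fun h => hk (mem_cset.1 (h ▸ hmem))
      · exact fun h => hk' (mem_cset.1 (h ▸ hmem))
    rw [Equiv.swap_apply_of_ne_of_ne hki hkj, htb] at hw
    exact mem_cset.2 (sc_of_pow hw)

theorem merge (h : ¬ σ.SameCycle i j) :
    (σ * Equiv.swap i j).SameCycle i j ∧
      cset (σ * Equiv.swap i j) i = cset σ i ∪ cset σ j := by
  have hij : i ≠ j := fun hh => h (hh ▸ Equiv.Perm.SameCycle.refl _ _)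
  -- walk from i (= swap j) along the σ-orbit of j
  have keyj : ∀ b, σ.SameCycle j b → ((σ * Equiv.swap i j)).SameCycle i b := by
    intro b hb
    obtain ⟨t, ht0, htb, hmin⟩ := minrep hb
    have hw : ((σ * Equiv.swap i j) ^ t) (Equiv.swap i j j) = (σ ^ t) j := by
      apply walk t ht0
      intro s hs hst
      refine ⟨fun hh => h (sc_of_pow hh).symm, (hmin s hs hst).2⟩
    rw [Equiv.swap_apply_right, htb] at hw
    exact sc_of_pow hw
  have keyi : ∀ b, σ.SameCycle i b → ((σ * Equiv.swap i j)).SameCycle j b := by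
    intro b hb
    obtain ⟨t, ht0, htb, hmin⟩ := minrep hb
    have hw : ((σ * Equiv.swap i j) ^ t) (Equiv.swap i j i) = (σ ^ t) i := by
      apply walk t ht0
      intro s hs hst
      refine ⟨(hmin s hs hst).2, fun hh => h (sc_of_pow hh)⟩
    rw [Equiv.swap_apply_left, htb] at hw
    exact sc_of_pow hw
  have hscij : (σ * Equiv.swap i j).SameCycle i j := keyj j (Equiv.Perm.SameCycle.refl _ _)
  refine ⟨hscij, Finset.Subset.antisymm ?_ ?_⟩
  · apply cset_subset_of_stable
    · intro b hb
      rw [Finset.mem_union, mem_cset, mem_cset] at hb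
      rw [Equiv.Perm.mul_apply]
      rcases eq_or_ne b i with rfl | hbi
      · rw [Equiv.swap_apply_left]
        exact Finset.mem_union_right _ (apply_mem_cset self_mem_cset)
      rcases eq_or_ne b j with rfl | hbj
      · rw [Equiv.swap_apply_right]
        exact Finset.mem_union_left _ (apply_mem_cset self_mem_cset)
      rw [Equiv.swap_apply_of_ne_of_ne hbi hbj]
      rcases hb with hb | hb
      · exact Finset.mem_union_left _ (apply_mem_cset (mem_cset.2 hb))
      · exact Finset.mem_union_right _ (apply_mem_cset (mem_cset.2 hb))
    · exact Finset.mem_union_left _ self_mem_cset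
  · intro b hb
    rw [Finset.mem_union, mem_cset, mem_cset] at hb
    rw [mem_cset]
    rcases hb with hb | hb
    · exact hscij.trans (keyi b hb)
    · exact keyj b hb

end PermAux

namespace PermAux
variable {n : ℕ} {σ : Equiv.Perm (Fin n)} {i j k b : Fin n}

theorem split (hij : i ≠ j) (h : σ.SameCycle i j) :
    ∃ A B : Finset (Fin n),
      A ∪ B = cset σ i ∧ Disjoint A B ∧ j ∈ A ∧ σ i ∈ A ∧ i ∈ B ∧ σ j ∈ B ∧
      cset (σ * Equiv.swap i j) j = A ∧ cset (σ * Equiv.swap i j) i = B := by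
  obtain ⟨d, hd0, hdj, hdmin⟩ := minrep h
  set τ := σ * Equiv.swap i j with hτ
  set A : Finset (Fin n) := (Finset.Icc 1 d).image (fun t => (σ ^ t) i) with hA
  have hmemA : ∀ b, b ∈ A ↔ ∃ t, 1 ≤ t ∧ t ≤ d ∧ (σ ^ t) i = b := by
    intro b; simp [hA, Finset.mem_image, Finset.mem_Icc, and_assoc]
  set B : Finset (Fin n) := cset σ i \ A with hB
  have hAsub : A ⊆ cset σ i := by
    intro b hb
    obtain ⟨t, -, -, rfl⟩ := (hmemA b).1 hb
    exact pow_apply_mem_cset t self_mem_cset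
  have hiA : i ∉ A := by
    intro hi
    obtain ⟨t, ht1, htd, hti⟩ := (hmemA i).1 hi
    rcases eq_or_lt_of_le htd with rfl | htd
    · have : j = i := by rw [← hdj, hti]
      exact hij this.symm
    · exact (hdmin t ht1 htd).2 hti
  have hjA : j ∈ A := (hmemA j).2 ⟨d, hd0, le_rfl, hdj⟩
  have hsiA : σ i ∈ A := (hmemA _).2 ⟨1, le_rfl, hd0, by simp⟩
  have hiB : i ∈ B := Finset.mem_sdiff.2 ⟨self_mem_cset, hiA⟩
  have hsjd : (σ ^ (d + 1)) i = σ j := by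
    rw [pow_succ', Equiv.Perm.mul_apply, hdj]
  have hpow_ne : ∀ s, 0 < s → s < d → (σ ^ s) i ≠ j ∧ (σ ^ s) i ≠ i := hdmin
  have hsjB : σ j ∈ B := by
    rw [hB, Finset.mem_sdiff]
    constructor
    · rw [← hsjd]; exact pow_apply_mem_cset _ self_mem_cset
    · intro hin
      obtain ⟨t, ht1, htd, hti⟩ := (hmemA _).1 hin
      rw [← hsjd] at hti
      -- (σ^t) i = (σ^(d+1)) i  with 1 ≤ t ≤ d  gives (σ^(d+1-t)) i = i
      have hcomm : (σ ^ t) ((σ ^ (d + 1 - t)) i) = (σ ^ t) i := by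
        rw [← Equiv.Perm.mul_apply, ← pow_add]
        have : t + (d + 1 - t) = d + 1 := by omega
        rw [this, hti]
      have hfix : (σ ^ (d + 1 - t)) i = i := (Equiv.injective _) hcomm
      rcases eq_or_lt_of_le (show d + 1 - t ≤ d by omega) with heq | hlt
      · rw [heq, hdj] at hfix; exact hij hfix.symm
      · exact (hdmin _ (by omega) hlt).2 hfix
  have hABd : Disjoint A B := Finset.disjoint_sdiff
  have hABu : A ∪ B = cset σ i := Finset.union_sdiff_of_subset hAsub
  -- forward walks
  have hwalkA : ∀ t, 1 ≤ t → t ≤ d → (τ ^ t) j = (σ ^ t) i := by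
    intro t ht1 htd
    have := walk (σ := σ) (i := i) (j := j) t ht1 i (fun s hs hst => by
      have h2 := hdmin s hs (by omega)
      exact ⟨h2.2, h2.1⟩)
    rwa [Equiv.swap_apply_left] at this
  have hAsubτ : A ⊆ cset τ j := by
    intro b hb
    obtain ⟨t, ht1, htd, rfl⟩ := (hmemA _).1 hb
    exact mem_cset.2 (sc_of_pow (hwalkA t ht1 htd))
  have hτstabA : ∀ b ∈ A, τ b ∈ A := by
    intro b hb
    rcases eq_or_ne b j with rfl | hbj
    · rw [hτ, Equiv.Perm.mul_apply, Equiv.swap_apply_right]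
      exact hsiA
    have hbi : b ≠ i := fun hh => hiA (hh ▸ hb)
    obtain ⟨t, ht1, htd, rfl⟩ := (hmemA _).1 hb
    have htd' : t < d := by
      rcases eq_or_lt_of_le htd with rfl | h2
      · exact absurd hdj hbj
      · exact h2
    rw [hτ, Equiv.Perm.mul_apply, Equiv.swap_apply_of_ne_of_ne hbi hbj,
      ← Equiv.Perm.mul_apply, ← pow_succ']
    exact (hmemA _).2 ⟨t + 1, by omega, by omega, rfl⟩
  have hcτj : cset τ j = A :=
    Finset.Subset.antisymm (cset_subset_of_stable hτstabA hjA) hAsubτ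
  -- B side
  have hτstabB : ∀ b ∈ B, τ b ∈ B := by
    intro b hb
    rw [hB, Finset.mem_sdiff] at hb
    obtain ⟨hbc, hbA⟩ := hb
    have hbj : b ≠ j := fun hh => hbA (hh ▸ hjA)
    rcases eq_or_ne b i with rfl | hbi
    · rw [hτ, Equiv.Perm.mul_apply, Equiv.swap_apply_left]
      exact hsjB
    rw [hτ, Equiv.Perm.mul_apply, Equiv.swap_apply_of_ne_of_ne hbi hbj]
    rw [hB, Finset.mem_sdiff]
    refine ⟨apply_mem_cset hbc, fun hin => ?_⟩
    obtain ⟨t, ht1, htd, hti⟩ := (hmemA _).1 hin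
    rcases eq_or_lt_of_le ht1 with rfl | ht2
    · simp only [pow_one] at hti
      exact hbi ((Equiv.injective σ) hti).symm
    · have : (σ ^ (t - 1)) i = b := by
        have : σ ((σ ^ (t - 1)) i) = σ b := by
          rw [← Equiv.Perm.mul_apply, ← pow_succ']
          have : t - 1 + 1 = t := by omega
          rw [this, hti]
        exact (Equiv.injective σ) this
      exact hbA ((hmemA _).2 ⟨t - 1, by omega, by omega, this⟩)
  have hBsubτ : B ⊆ cset τ i := by
    intro b hb
    rw [hB, Finset.mem_sdiff] at hb
    obtain ⟨hbc, hbA⟩ := hb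
    obtain ⟨tb, htb0, htbb, htbmin⟩ := minrep (mem_cset.1 hbc)
    have hdtb : d < tb := by
      by_contra hle
      exact hbA ((hmemA _).2 ⟨tb, htb0, by omega, htbb⟩)
    have hw : (τ ^ (tb - d)) i = b := by
      have hw0 := walk (σ := σ) (i := i) (j := j) (tb - d) (by omega) j (fun s hs hst => by
        have hsd : (σ ^ (s + d)) i = (σ ^ s) j := by
          rw [pow_add, Equiv.Perm.mul_apply, hdj]
        constructor
        · intro hh
          exact (htbmin (s + d) (by omega) (by omega)).2 (by rw [hsd]; exact hh)
        · intro hh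
          have : (σ ^ (s + d)) i = (σ ^ d) i := by rw [hsd, hh, hdj]
          have h3 : (σ ^ d) ((σ ^ s) i) = (σ ^ d) i := by
            rw [← Equiv.Perm.mul_apply, ← pow_add, Nat.add_comm d s]
            exact this
          have h4 : (σ ^ s) i = i := (Equiv.injective _) h3
          exact (htbmin s (by omega) (by omega)).2 h4)
      rw [Equiv.swap_apply_right] at hw0
      rw [hw0]
      have : (σ ^ (tb - d)) j = (σ ^ tb) i := by
        rw [← hdj, ← Equiv.Perm.mul_apply, ← pow_add]
        have h5 : tb - d + d = tb := by omega
        rw [h5]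
      rw [this, htbb]
    exact mem_cset.2 (sc_of_pow hw)
  have hcτi : cset τ i = B :=
    Finset.Subset.antisymm (cset_subset_of_stable hτstabB hiB) hBsubτ
  exact ⟨A, B, hABu, hABd, hjA, hsiA, hiB, hsjB, hcτj, hcτi⟩

end PermAux


-- GW-level development

namespace GWP
open PermAux GW
variable {m n : ℕ}

theorem cycleOf_eq_cset (x : GW m n) (i : Fin n) : x.cycleOf i = cset x.perm i := rfl

theorem mem_cycles {x : GW m n} {C : Finset (Fin n)} :
    C ∈ GW.cycles x ↔ ∃ i, cset x.perm i = C := by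
  simp [GW.cycles, cycleOf_eq_cset, eq_comm]

theorem cset_mem_cycles (x : GW m n) (i : Fin n) : cset x.perm i ∈ GW.cycles x :=
  mem_cycles.2 ⟨i, rfl⟩

theorem eq_cset_of_mem_cycles {x : GW m n} {C : Finset (Fin n)} (hC : C ∈ GW.cycles x)
    {k : Fin n} (hk : k ∈ C) : C = cset x.perm k := by
  obtain ⟨i, rfl⟩ := mem_cycles.1 hC
  exact cset_eq_of_sameCycle (mem_cset.1 hk)

theorem cycles_nonempty {x : GW m n} {C : Finset (Fin n)} (hC : C ∈ GW.cycles x) :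
    C.Nonempty := by
  obtain ⟨i, rfl⟩ := mem_cycles.1 hC
  exact ⟨i, self_mem_cset⟩

theorem cycles_disjoint {x : GW m n} {C D : Finset (Fin n)} (hC : C ∈ GW.cycles x)
    (hD : D ∈ GW.cycles x) (hCD : C ≠ D) : Disjoint C D := by
  rw [Finset.disjoint_left]
  intro k hkC hkD
  exact hCD ((eq_cset_of_mem_cycles hC hkC).trans (eq_cset_of_mem_cycles hD hkD).symm)

theorem cycles_biUnion (x : GW m n) : (GW.cycles x).biUnion id = Finset.univ := by
  ext k
  simp only [Finset.mem_biUnion, Finset.mem_univ, iff_true, id]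
  exact ⟨cset x.perm k, cset_mem_cycles x k, self_mem_cset⟩

theorem sum_cycles {M : Type*} [AddCommMonoid M] (x : GW m n) (f : Fin n → M) :
    ∑ C ∈ GW.cycles x, ∑ i ∈ C, f i = ∑ i, f i := by
  have hd : (↑(GW.cycles x) : Set (Finset (Fin n))).PairwiseDisjoint id := by
    intro C hC D hD hCD
    exact cycles_disjoint hC hD hCD
  calc ∑ C ∈ GW.cycles x, ∑ i ∈ C, f i = ∑ C ∈ GW.cycles x, ∑ i ∈ id C, f i := rfl
    _ = ∑ i ∈ (GW.cycles x).biUnion id, f i := (Finset.sum_biUnion hd).symm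
    _ = ∑ i, f i := by rw [cycles_biUnion]

theorem sum_card_cycles (x : GW m n) : ∑ C ∈ GW.cycles x, C.card = n := by
  calc ∑ C ∈ GW.cycles x, C.card = ∑ C ∈ GW.cycles x, ∑ _i ∈ C, 1 := by simp
    _ = ∑ _i : Fin n, 1 := sum_cycles x _
    _ = n := by simp

theorem numCycles_le (x : GW m n) : GW.numCycles x ≤ n := by
  have := Finset.card_image_le (s := (Finset.univ : Finset (Fin n))) (f := fun i => x.cycleOf i)
  simpa [GW.numCycles, GW.cycles] using this

theorem wtTot_eq_sum_cycles (x : GW m n) : GW.wtTot x = ∑ C ∈ GW.cycles x, GW.cycWt x C :=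
  (sum_cycles x x.wt).symm

/-- The multiset of cycle weights. -/
def W (x : GW m n) : Multiset (ZMod m) := (GW.cycles x).val.map (GW.cycWt x)

/-- The multiset of nonzero cycle weights. -/
def NZW (x : GW m n) : Multiset (ZMod m) := (W x).filter (· ≠ 0)

theorem W_sum (x : GW m n) : (W x).sum = GW.wtTot x := by
  rw [wtTot_eq_sum_cycles]; rfl

theorem NZW_sum (x : GW m n) : (NZW x).sum = GW.wtTot x := by
  rw [← W_sum]
  have h := Multiset.filter_add_not (fun c => c ≠ (0 : ZMod m)) (W x)
  conv_rhs => rw [← h]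
  rw [Multiset.sum_add, NZW]
  have h0 : (Multiset.filter (fun c => ¬ c ≠ (0 : ZMod m)) (W x)).sum = 0 := by
    apply Multiset.sum_eq_zero
    intro c hc
    have := Multiset.of_mem_filter hc
    simpa using this
  rw [h0, add_zero]

theorem c0_eq (x : GW m n) : GW.c0 x = Multiset.card ((W x).filter (· = 0)) := by
  rw [GW.c0, W, Multiset.filter_map]
  simp [Finset.filter, Finset.card, Function.comp_def]

theorem c0_add_NZW_card (x : GW m n) :
    GW.c0 x + Multiset.card (NZW x) = GW.numCycles x := by
  have h := Multiset.filter_add_not (fun c => c = (0 : ZMod m)) (W x)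
  have h2 := congrArg Multiset.card h
  rw [Multiset.card_add] at h2
  have hW : Multiset.card (W x) = GW.numCycles x := by rw [W, Multiset.card_map]; rfl
  rw [c0_eq]
  have hNZ : NZW x = Multiset.filter (fun c => ¬ c = (0 : ZMod m)) (W x) := rfl
  rw [hNZ]
  exact h2.trans hW

theorem c0_le_numCycles (x : GW m n) : GW.c0 x ≤ GW.numCycles x :=
  Finset.card_filter_le _ _

theorem codim_eq (x : GW m n) :
    GW.codimfix x = (n - GW.numCycles x) + Multiset.card (NZW x) := by
  have h1 := c0_add_NZW_card x
  have h2 := numCycles_le x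
  rw [GW.codimfix]
  omega

end GWP


namespace GWP
open PermAux GW
variable {m n : ℕ}

theorem image_eq_of_stable {σ : Equiv.Perm (Fin n)} {C : Finset (Fin n)}
    (h : ∀ k ∈ C, σ k ∈ C) : C.image σ = C := by
  apply Finset.eq_of_subset_of_card_le
  · intro b hb
    obtain ⟨k, hk, rfl⟩ := Finset.mem_image.1 hb
    exact h k hk
  · rw [Finset.card_image_of_injective _ (Equiv.injective σ)]

theorem inv_apply_mem_cset {σ : Equiv.Perm (Fin n)} {i k : Fin n} (hk : k ∈ cset σ i) :
    σ⁻¹ k ∈ cset σ i := by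
  rw [mem_cset] at hk ⊢
  exact Equiv.Perm.sameCycle_symm_apply_right.2 hk

theorem mem_cycles_stable {x : GW m n} {C : Finset (Fin n)} (hC : C ∈ GW.cycles x)
    {k : Fin n} (hk : k ∈ C) : x.perm k ∈ C := by
  obtain ⟨i, rfl⟩ := mem_cycles.1 hC
  exact apply_mem_cset hk

theorem mem_cycles_stable_inv {x : GW m n} {C : Finset (Fin n)} (hC : C ∈ GW.cycles x)
    {k : Fin n} (hk : k ∈ C) : x.perm⁻¹ k ∈ C := by
  obtain ⟨i, rfl⟩ := mem_cycles.1 hC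
  exact inv_apply_mem_cset hk

theorem mem_image_perm {σ : Equiv.Perm (Fin n)} {C : Finset (Fin n)} {i : Fin n} :
    i ∈ C.image ⇑σ⁻¹ ↔ σ i ∈ C := by
  constructor
  · rintro hb
    obtain ⟨k, hk, rfl⟩ := Finset.mem_image.1 hb
    simpa using hk
  · intro hb
    exact Finset.mem_image.2 ⟨σ i, hb, by simp⟩

theorem cycWt_mul (x t : GW m n) (C : Finset (Fin n)) :
    GW.cycWt (x * t) C = GW.cycWt x C + ∑ l ∈ C.image ⇑x.perm⁻¹, t.wt l := by
  rw [GW.cycWt, GW.cycWt]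
  have h1 : ∀ k ∈ C, (x * t).wt k = x.wt k + t.wt (x.perm⁻¹ k) := fun k _ => rfl
  rw [Finset.sum_congr rfl h1, Finset.sum_add_distrib]
  congr 1
  exact (Finset.sum_image (fun a _ b _ h => (Equiv.injective x.perm⁻¹ h))).symm

theorem image_inv_eq_of_mem_cycles {x : GW m n} {C : Finset (Fin n)}
    (hC : C ∈ GW.cycles x) : C.image ⇑x.perm⁻¹ = C :=
  image_eq_of_stable (fun k hk => mem_cycles_stable_inv hC hk)

/-- Transposition-type elements. -/
def tw (i j : Fin n) (a : ZMod m) : GW m n :=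
  ⟨Equiv.swap i j, fun k => if k = i then a else if k = j then -a else 0⟩

/-- Diagonal elements. -/
def dw (i : Fin n) (a : ZMod m) : GW m n := ⟨1, fun k => if k = i then a else 0⟩

@[simp] theorem tw_perm (i j : Fin n) (a : ZMod m) : (tw i j a).perm = Equiv.swap i j := rfl
@[simp] theorem dw_perm (i : Fin n) (a : ZMod m) : (dw i a).perm = 1 := rfl

theorem tw_wt_sum {i j : Fin n} (hij : i ≠ j) (a : ZMod m) (S : Finset (Fin n)) :
    ∑ l ∈ S, (tw i j a).wt l = (if i ∈ S then a else 0) + (if j ∈ S then -a else 0) := by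
  have h1 : ∀ l ∈ S, (tw i j a).wt l =
      (if l = i then a else 0) + (if l = j then -a else 0) := by
    intro l _
    show (if l = i then a else if l = j then -a else 0) = _
    rcases eq_or_ne l i with rfl | hli
    · simp [hij]
    rcases eq_or_ne l j with rfl | hlj
    · simp [hli]
    · simp [hli, hlj]
  rw [Finset.sum_congr rfl h1, Finset.sum_add_distrib]
  congr 1 <;> simp [Finset.sum_ite_eq']

theorem dw_wt_sum (i : Fin n) (a : ZMod m) (S : Finset (Fin n)) :
    ∑ l ∈ S, (dw i a).wt l = if i ∈ S then a else 0 := by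
  have h1 : ∀ l ∈ S, (dw i a).wt l = if l = i then a else 0 := fun l _ => rfl
  rw [Finset.sum_congr rfl h1]
  simp [Finset.sum_ite_eq']

theorem wtTot_mul (x y : GW m n) : GW.wtTot (x * y) = GW.wtTot x + GW.wtTot y := by
  rw [GW.wtTot, GW.wtTot, GW.wtTot]
  have : ∀ i, (x * y).wt i = x.wt i + y.wt (x.perm⁻¹ i) := fun i => rfl
  simp only [this]
  rw [Finset.sum_add_distrib]
  congr 1
  exact Equiv.sum_comp x.perm⁻¹ y.wt

@[simp] theorem wtTot_one : GW.wtTot (1 : GW m n) = 0 := by simp [GW.wtTot]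

theorem wtTot_inv (x : GW m n) : GW.wtTot x⁻¹ = -GW.wtTot x := by
  have := wtTot_mul x⁻¹ x
  rw [inv_mul_cancel, wtTot_one] at this
  exact eq_neg_of_add_eq_zero_left this.symm

theorem Gmem_mul {p : ℕ} {hpm : p ∣ m} {x y : GW m n} (hx : GW.Gmem p hpm x)
    (hy : GW.Gmem p hpm y) : GW.Gmem p hpm (x * y) := by
  rw [GW.Gmem, wtTot_mul, map_add, hx, hy, add_zero]

theorem Gmem_inv {p : ℕ} {hpm : p ∣ m} {x : GW m n} (hx : GW.Gmem p hpm x) :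
    GW.Gmem p hpm x⁻¹ := by
  rw [GW.Gmem, wtTot_inv, map_neg, hx, neg_zero]

theorem Gmem_tw {p : ℕ} {hpm : p ∣ m} {i j : Fin n} (hij : i ≠ j) (a : ZMod m) :
    GW.Gmem p hpm (tw i j a) := by
  have h := tw_wt_sum hij a (Finset.univ)
  rw [GW.Gmem, GW.wtTot, h]
  simp

-- inverse lemmas
theorem cset_inv (σ : Equiv.Perm (Fin n)) (i : Fin n) : cset σ⁻¹ i = cset σ i := by
  ext b
  rw [mem_cset, mem_cset]
  exact Equiv.Perm.sameCycle_inv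

theorem cycles_inv (x : GW m n) : GW.cycles x⁻¹ = GW.cycles x := by
  unfold GW.cycles GW.cycleOf
  congr 1
  ext i b
  simp only [GW.inv_perm]
  simp [Equiv.Perm.sameCycle_inv]

theorem cycWt_inv {x : GW m n} {C : Finset (Fin n)} (hC : C ∈ GW.cycles x) :
    GW.cycWt x⁻¹ C = -GW.cycWt x C := by
  rw [GW.cycWt, GW.cycWt]
  have h1 : ∀ k ∈ C, (x⁻¹).wt k = -x.wt (x.perm k) := fun k _ => rfl
  calc ∑ k ∈ C, (x⁻¹).wt k = ∑ k ∈ C, -x.wt (x.perm k) := Finset.sum_congr rfl h1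
    _ = -∑ k ∈ C, x.wt (x.perm k) := by rw [Finset.sum_neg_distrib]
    _ = -∑ l ∈ C.image ⇑x.perm, x.wt l := by
        rw [Finset.sum_image (fun a _ b _ h => (Equiv.injective x.perm h))]
    _ = -∑ l ∈ C, x.wt l := by
        rw [image_eq_of_stable (fun k hk => mem_cycles_stable hC hk)]

theorem W_inv (x : GW m n) : W x⁻¹ = (W x).map (fun c => -c) := by
  rw [W, W, cycles_inv, Multiset.map_map]
  apply Multiset.map_congr rfl
  intro C hC
  exact cycWt_inv (by exact hC)

theorem NZW_inv (x : GW m n) : NZW x⁻¹ = (NZW x).map (fun c => -c) := by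
  rw [NZW, NZW, W_inv, Multiset.filter_map]
  congr 1
  apply Multiset.filter_congr
  intro c _
  simp

theorem codim_inv (x : GW m n) : GW.codimfix x⁻¹ = GW.codimfix x := by
  rw [GW.codimfix, GW.codimfix, GW.c0, GW.c0, cycles_inv]
  congr 2
  apply Finset.filter_congr
  intro C hC
  rw [cycWt_inv hC]
  simp

theorem numCycles_inv (x : GW m n) : GW.numCycles x⁻¹ = GW.numCycles x := by
  rw [GW.numCycles, GW.numCycles, cycles_inv]

-- one / diagonal lemmas
theorem cset_of_fixed {σ : Equiv.Perm (Fin n)} {k : Fin n} (h : σ k = k) :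
    cset σ k = {k} := by
  ext b
  rw [mem_cset, Finset.mem_singleton]
  constructor
  · intro hb
    obtain ⟨t, -, -, ht⟩ := hb.exists_pow_eq''
    have hfix : ∀ s : ℕ, (σ ^ s) k = k := by
      intro s
      induction s with
      | zero => rfl
      | succ s ih => rw [pow_succ', Equiv.Perm.mul_apply, ih, h]
    rw [← ht, hfix t]
  · rintro rfl
    exact Equiv.Perm.SameCycle.refl _ _

theorem cset_one (i : Fin n) : cset (1 : Equiv.Perm (Fin n)) i = {i} := cset_of_fixed rfl

theorem cycles_diag {x : GW m n} (h : x.perm = 1) :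
    GW.cycles x = Finset.univ.image (fun i => ({i} : Finset (Fin n))) := by
  unfold GW.cycles
  congr 1
  ext i
  rw [cycleOf_eq_cset, h, cset_one]

theorem W_diag {x : GW m n} (h : x.perm = 1) : W x = Finset.univ.val.map x.wt := by
  rw [W, cycles_diag h, Finset.image_val]
  have hnd : (Finset.univ.val.map (fun i => ({i} : Finset (Fin n)))).Nodup :=
    Finset.univ.nodup.map fun a b hab => Finset.singleton_injective hab
  rw [Multiset.dedup_eq_self.2 hnd, Multiset.map_map]
  apply Multiset.map_congr rfl
  intro i _
  show GW.cycWt x {i} = x.wt i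
  rw [GW.cycWt, Finset.sum_singleton]

theorem numCycles_diag {x : GW m n} (h : x.perm = 1) : GW.numCycles x = n := by
  rw [GW.numCycles, cycles_diag h,
    Finset.card_image_of_injective _ (fun a b hab => Finset.singleton_injective hab),
    Finset.card_univ, Fintype.card_fin]

theorem codim_diag {x : GW m n} (h : x.perm = 1) :
    GW.codimfix x = Multiset.card (NZW x) := by
  rw [codim_eq, numCycles_diag h]
  omega

theorem codim_one : GW.codimfix (1 : GW m n) = 0 := by
  rw [codim_diag rfl]
  have : NZW (1 : GW m n) = 0 := by
    rw [NZW, Multiset.filter_eq_nil]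
    intro a ha
    rw [W_diag rfl] at ha
    obtain ⟨i, -, rfl⟩ := Multiset.mem_map.1 ha
    simp
  rw [this]
  rfl

theorem numCycles_lt {x : GW m n} (h : x.perm ≠ 1) : GW.numCycles x < n := by
  have : ∃ k, x.perm k ≠ k := by
    by_contra hc
    push_neg at hc
    exact h (Equiv.ext hc)
  obtain ⟨k, hk⟩ := this
  have h2 : 2 ≤ (cset x.perm k).card := by
    apply Finset.one_lt_card.2
    exact ⟨x.perm k, apply_mem_cset self_mem_cset, k, self_mem_cset, hk⟩
  have hlt : ∑ C ∈ GW.cycles x, 1 < ∑ C ∈ GW.cycles x, C.card := by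
    apply Finset.sum_lt_sum
    · intro C hC
      exact Finset.card_pos.2 (cycles_nonempty hC)
    · exact ⟨cset x.perm k, cset_mem_cycles x k, by omega⟩
  rw [sum_card_cycles] at hlt
  simpa [GW.numCycles] using hlt

theorem codim_pos {x : GW m n} (h : x.perm ≠ 1) : 0 < GW.codimfix x := by
  have h1 := numCycles_lt h
  have h2 := c0_le_numCycles x
  rw [GW.codimfix]
  omega

end GWP


namespace GWP
open PermAux GW
variable {m n : ℕ}

theorem finset_val_cons {α : Type*} [DecidableEq α] {S : Finset α} {C : α} (h : C ∈ S) :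
    S.val = C ::ₘ (S.erase C).val := by
  rw [Finset.erase_val, Multiset.cons_erase (by exact h)]

theorem cycles_congr {x y : GW m n} (h : x.perm = y.perm) : GW.cycles x = GW.cycles y := by
  unfold GW.cycles GW.cycleOf
  rw [h]

/-- Effect of right multiplication by a diagonal element on cycle weights. -/
theorem diag_gw (x : GW m n) (i : Fin n) (a : ZMod m) :
    ∃ s : Multiset (ZMod m),
      W x = GW.cycWt x (cset x.perm i) ::ₘ s ∧
      W (x * dw i a) = (GW.cycWt x (cset x.perm i) + a) ::ₘ s := by
  set Ci := cset x.perm i with hCi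
  have hmem : Ci ∈ GW.cycles x := cset_mem_cycles x i
  have hperm : (x * dw i a).perm = x.perm := by
    show x.perm * 1 = x.perm
    rw [mul_one]
  have hcyc : GW.cycles (x * dw i a) = GW.cycles x := cycles_congr hperm
  have hwt : ∀ C ∈ GW.cycles x, GW.cycWt (x * dw i a) C
      = GW.cycWt x C + (if i ∈ C then a else 0) := by
    intro C hC
    rw [cycWt_mul, image_inv_eq_of_mem_cycles hC, dw_wt_sum]
  refine ⟨((GW.cycles x).erase Ci).val.map (GW.cycWt x), ?_, ?_⟩
  · rw [W, finset_val_cons hmem, Multiset.map_cons]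
  · rw [W, hcyc, finset_val_cons hmem, Multiset.map_cons,
      hwt Ci hmem, if_pos (self_mem_cset)]
    congr 1
    apply Multiset.map_congr rfl
    intro C hC
    have hC' : C ∈ (GW.cycles x).erase Ci := hC
    have hCC : C ∈ GW.cycles x := Finset.mem_of_mem_erase hC'
    have hiC : i ∉ C := fun hiC =>
      (Finset.ne_of_mem_erase hC') (eq_cset_of_mem_cycles hCC hiC)
    rw [hwt C hCC, if_neg hiC, add_zero]

theorem cycWt_mul_tw_untouched {x : GW m n} {C : Finset (Fin n)} {i j : Fin n}
    (hij : i ≠ j) (a : ZMod m) (hC : C ∈ GW.cycles x) (hiC : i ∉ C) (hjC : j ∉ C) :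
    GW.cycWt (x * tw i j a) C = GW.cycWt x C := by
  rw [cycWt_mul, image_inv_eq_of_mem_cycles hC, tw_wt_sum hij, if_neg hiC, if_neg hjC]
  simp

/-- Effect of right multiplication by a transposition-type element, merge case. -/
theorem merge_gw (x : GW m n) {i j : Fin n} (a : ZMod m) (h : ¬ x.perm.SameCycle i j) :
    ∃ s : Multiset (ZMod m),
      W x = GW.cycWt x (cset x.perm i) ::ₘ GW.cycWt x (cset x.perm j) ::ₘ s ∧
      W (x * tw i j a) =
        (GW.cycWt x (cset x.perm i) + GW.cycWt x (cset x.perm j)) ::ₘ s := by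
  have hij : i ≠ j := fun hh => h (hh ▸ Equiv.Perm.SameCycle.refl _ _)
  set σ := x.perm with hσ
  set y := x * tw i j a with hy
  set τ := σ * Equiv.swap i j with hτ
  obtain ⟨hsc, hM⟩ := PermAux.merge h
  set Ci := cset σ i with hCi
  set Cj := cset σ j with hCj
  set M := Ci ∪ Cj with hMdef
  have hCij : Ci ≠ Cj := by
    intro he
    have : j ∈ Ci := by rw [he]; exact self_mem_cset
    exact h (mem_cset.1 this)
  have hCimem : Ci ∈ GW.cycles x := cset_mem_cycles x i
  have hCjmem : Cj ∈ GW.cycles x := cset_mem_cycles x j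
  have hdisj : Disjoint Ci Cj := cycles_disjoint hCimem hCjmem hCij
  set S' := ((GW.cycles x).erase Ci).erase Cj with hS'
  have hS'sub : ∀ C ∈ S', C ∈ GW.cycles x ∧ C ≠ Ci ∧ C ≠ Cj := fun C hC =>
    ⟨Finset.mem_of_mem_erase (Finset.mem_of_mem_erase hC),
      Finset.ne_of_mem_erase (Finset.mem_of_mem_erase hC), Finset.ne_of_mem_erase hC⟩
  have hiM : i ∈ M := Finset.mem_union_left _ self_mem_cset
  have hjM : j ∈ M := Finset.mem_union_right _ self_mem_cset
  have hycyc : GW.cycles y = insert M S' := by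
    apply Finset.Subset.antisymm
    · intro C hC
      obtain ⟨k, rfl⟩ := mem_cycles.1 hC
      by_cases hk : k ∈ M
      · have hsck : τ.SameCycle i k := mem_cset.1 (by rw [hM]; exact hk)
        rw [show cset y.perm k = cset τ k from rfl, ← cset_eq_of_sameCycle hsck, hM]
        exact Finset.mem_insert_self _ _
      · rw [hMdef, Finset.mem_union] at hk
        push_neg at hk
        have h1 : ¬ σ.SameCycle k i := fun hh => hk.1 (mem_cset.2 hh.symm)
        have h2 : ¬ σ.SameCycle k j := fun hh => hk.2 (mem_cset.2 hh.symm)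
        rw [show cset y.perm k = cset τ k from rfl, hτ, PermAux.out h1 h2]
        apply Finset.mem_insert_of_mem
        rw [hS']
        refine Finset.mem_erase.2 ⟨fun he => hk.2 (he ▸ self_mem_cset), ?_⟩
        exact Finset.mem_erase.2 ⟨fun he => hk.1 (he ▸ self_mem_cset), cset_mem_cycles x k⟩
    · intro C hC
      rcases Finset.mem_insert.1 hC with rfl | hC'
      · rw [← hM]
        exact cset_mem_cycles y i
      · obtain ⟨hCmem, hCi', hCj'⟩ := hS'sub C hC'
        obtain ⟨k, hk⟩ := cycles_nonempty hCmem
        have hCk : C = cset σ k := eq_cset_of_mem_cycles hCmem hk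
        have h1 : ¬ σ.SameCycle k i := fun hh => hCi' (hCk.trans (cset_eq_of_sameCycle hh))
        have h2 : ¬ σ.SameCycle k j := fun hh => hCj' (hCk.trans (cset_eq_of_sameCycle hh))
        have hout : cset τ k = C := by rw [hτ, PermAux.out h1 h2, ← hCk]
        rw [← hout]
        exact cset_mem_cycles y k
  have hMS' : M ∉ S' := by
    intro hMS
    obtain ⟨hMmem, -, -⟩ := hS'sub M hMS
    have hMeq : M = cset σ i := eq_cset_of_mem_cycles hMmem hiM
    exact h (mem_cset.1 (hMeq ▸ hjM))
  have hCjCi : Cj ∈ (GW.cycles x).erase Ci := Finset.mem_erase.2 ⟨hCij.symm, hCjmem⟩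
  have hvalx : (GW.cycles x).val = Ci ::ₘ Cj ::ₘ S'.val := by
    rw [finset_val_cons hCimem]
    congr 1
    rw [finset_val_cons hCjCi]
  have hvaly : (GW.cycles y).val = M ::ₘ S'.val := by
    rw [hycyc, Finset.insert_val_of_notMem hMS']
  have hXM : GW.cycWt x M = GW.cycWt x Ci + GW.cycWt x Cj := by
    rw [GW.cycWt, GW.cycWt, GW.cycWt]
    exact Finset.sum_union hdisj
  have hMstable : M.image ⇑x.perm⁻¹ = M := by
    rw [hMdef, Finset.image_union, image_inv_eq_of_mem_cycles hCimem,
      image_inv_eq_of_mem_cycles hCjmem]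
  have hwtM : GW.cycWt y M = GW.cycWt x Ci + GW.cycWt x Cj := by
    rw [hy, cycWt_mul, hMstable, tw_wt_sum hij, if_pos hiM, if_pos hjM, hXM]
    ring
  refine ⟨S'.val.map (GW.cycWt x), ?_, ?_⟩
  · rw [W, hvalx, Multiset.map_cons, Multiset.map_cons]
  · rw [W, hvaly, Multiset.map_cons, hwtM]
    congr 1
    apply Multiset.map_congr rfl
    intro C hC
    obtain ⟨hCmem, hCi', hCj'⟩ := hS'sub C hC
    have hiC : i ∉ C := fun hh => hCi' (eq_cset_of_mem_cycles hCmem hh)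
    have hjC : j ∉ C := fun hh => hCj' (eq_cset_of_mem_cycles hCmem hh)
    rw [hy]
    exact cycWt_mul_tw_untouched hij a hCmem hiC hjC

/-- Effect of right multiplication by a transposition-type element, split case. -/
theorem split_gw (x : GW m n) {i j : Fin n} (a : ZMod m) (hij : i ≠ j)
    (h : x.perm.SameCycle i j) :
    ∃ (wA wB : ZMod m) (s : Multiset (ZMod m)),
      W x = (wA + wB) ::ₘ s ∧
      W (x * tw i j a) = (wA + a) ::ₘ (wB - a) ::ₘ s ∧
      (x.perm i = j → wA = x.wt j) := by
  set σ := x.perm with hσ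
  set y := x * tw i j a with hy
  set τ := σ * Equiv.swap i j with hτ
  obtain ⟨A, B, hABu, hABd, hjA, hsiA, hiB, hsjB, hcA, hcB⟩ := PermAux.split hij h
  set C := cset σ i with hC
  set S' := (GW.cycles x).erase C with hS'
  have hCmem : C ∈ GW.cycles x := cset_mem_cycles x i
  have hiA : i ∉ A := Finset.disjoint_right.1 hABd hiB
  have hjB : j ∉ B := Finset.disjoint_left.1 hABd hjA
  have hsjA : σ j ∉ A := Finset.disjoint_right.1 hABd hsjB
  have hsiB : σ i ∉ B := Finset.disjoint_left.1 hABd hsiA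
  have hS'sub : ∀ C' ∈ S', C' ∈ GW.cycles x ∧ C' ≠ C := fun C' hC' =>
    ⟨Finset.mem_of_mem_erase hC', Finset.ne_of_mem_erase hC'⟩
  have hCji : cset σ j = C := (cset_eq_of_sameCycle h).symm
  have huntouched : ∀ C' ∈ S', i ∉ C' ∧ j ∉ C' := by
    intro C' hC'
    obtain ⟨hCm', hne⟩ := hS'sub C' hC'
    exact ⟨fun hh => hne (eq_cset_of_mem_cycles hCm' hh),
      fun hh => hne ((eq_cset_of_mem_cycles hCm' hh).trans hCji)⟩
  have hycyc : GW.cycles y = insert A (insert B S') := by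
    apply Finset.Subset.antisymm
    · intro D hD
      obtain ⟨k, rfl⟩ := mem_cycles.1 hD
      by_cases hkA : k ∈ A
      · have hsck : τ.SameCycle j k := mem_cset.1 (by rw [hcA]; exact hkA)
        rw [show cset y.perm k = cset τ k from rfl, ← cset_eq_of_sameCycle hsck, hcA]
        exact Finset.mem_insert_self _ _
      by_cases hkB : k ∈ B
      · have hsck : τ.SameCycle i k := mem_cset.1 (by rw [hcB]; exact hkB)
        rw [show cset y.perm k = cset τ k from rfl, ← cset_eq_of_sameCycle hsck, hcB]
        exact Finset.mem_insert_of_mem (Finset.mem_insert_self _ _)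
      · have hkC : k ∉ C := by
          intro hkC
          rcases Finset.mem_union.1 (by rw [hABu]; exact hkC) with h1 | h1
          exacts [hkA h1, hkB h1]
        have h1 : ¬ σ.SameCycle k i := fun hh => hkC (mem_cset.2 hh.symm)
        have h2 : ¬ σ.SameCycle k j := fun hh => hkC (mem_cset.2 (h.trans hh.symm))
        rw [show cset y.perm k = cset τ k from rfl, hτ, PermAux.out h1 h2]
        refine Finset.mem_insert_of_mem (Finset.mem_insert_of_mem ?_)
        exact Finset.mem_erase.2 ⟨fun he => hkC (he ▸ self_mem_cset), cset_mem_cycles x k⟩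
    · intro D hD
      rcases Finset.mem_insert.1 hD with rfl | hD'
      · rw [← hcA]
        exact cset_mem_cycles y j
      rcases Finset.mem_insert.1 hD' with rfl | hD''
      · rw [← hcB]
        exact cset_mem_cycles y i
      · obtain ⟨hDm, hDne⟩ := hS'sub D hD''
        obtain ⟨k, hk⟩ := cycles_nonempty hDm
        have hDk : D = cset σ k := eq_cset_of_mem_cycles hDm hk
        have h1 : ¬ σ.SameCycle k i := fun hh => hDne (hDk.trans (cset_eq_of_sameCycle hh))
        have h2 : ¬ σ.SameCycle k j := fun hh =>
          hDne ((hDk.trans (cset_eq_of_sameCycle hh)).trans hCji)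
        have hout : cset τ k = D := by rw [hτ, PermAux.out h1 h2, ← hDk]
        rw [← hout]
        exact cset_mem_cycles y k
  have hABne : A ≠ B := fun he => hjB (he ▸ hjA)
  have hAS' : A ∉ S' := by
    intro hA
    obtain ⟨hAm, hAne⟩ := hS'sub A hA
    exact hAne ((eq_cset_of_mem_cycles hAm hjA).trans hCji)
  have hBS' : B ∉ S' := by
    intro hB
    obtain ⟨hBm, hBne⟩ := hS'sub B hB
    exact hBne (eq_cset_of_mem_cycles hBm hiB)
  have hvalx : (GW.cycles x).val = C ::ₘ S'.val := finset_val_cons hCmem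
  have hvaly : (GW.cycles y).val = A ::ₘ B ::ₘ S'.val := by
    rw [hycyc, Finset.insert_val_of_notMem (by
      intro hh
      rcases Finset.mem_insert.1 hh with he | he
      exacts [hABne he, hAS' he]), Finset.insert_val_of_notMem hBS']
  have hwtA : GW.cycWt y A = (∑ k ∈ A, x.wt k) + a := by
    rw [hy, cycWt_mul, tw_wt_sum hij,
      if_pos (mem_image_perm.2 hsiA), if_neg (fun hh => hsjA (mem_image_perm.1 hh))]
    show (∑ k ∈ A, x.wt k) + (a + 0) = _
    rw [add_zero]
  have hwtB : GW.cycWt y B = (∑ k ∈ B, x.wt k) - a := by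
    rw [hy, cycWt_mul, tw_wt_sum hij,
      if_neg (fun hh => hsiB (mem_image_perm.1 hh)), if_pos (mem_image_perm.2 hsjB)]
    show (∑ k ∈ B, x.wt k) + (0 + -a) = _
    rw [zero_add, sub_eq_add_neg]
  have hwtC : GW.cycWt x C = (∑ k ∈ A, x.wt k) + (∑ k ∈ B, x.wt k) := by
    rw [GW.cycWt, ← hABu]
    exact Finset.sum_union hABd
  refine ⟨∑ k ∈ A, x.wt k, ∑ k ∈ B, x.wt k, S'.val.map (GW.cycWt x), ?_, ?_, ?_⟩
  · rw [W, hvalx, Multiset.map_cons, ← hwtC]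
  · rw [W, hvaly, Multiset.map_cons, Multiset.map_cons, hwtA, hwtB]
    congr 1
    congr 1
    apply Multiset.map_congr rfl
    intro C' hC'
    obtain ⟨h1, h2⟩ := huntouched C' hC'
    rw [hy]
    exact cycWt_mul_tw_untouched hij a (hS'sub C' hC').1 h1 h2
  · intro hfix
    have hτj : τ j = j := by
      rw [hτ, Equiv.Perm.mul_apply, Equiv.swap_apply_right, hfix]
    have hA1 : A = {j} := by rw [← hcA]; exact cset_of_fixed hτj
    rw [hA1, Finset.sum_singleton]

end GWP


namespace GWP
open PermAux GW
variable {m n : ℕ}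

theorem card_W (x : GW m n) : Multiset.card (W x) = GW.numCycles x := by
  rw [W, Multiset.card_map]
  rfl

theorem codim_W (x : GW m n) :
    GW.codimfix x = (n - Multiset.card (W x)) + Multiset.card (NZW x) := by
  rw [card_W, codim_eq]

theorem perm_eq_one_of_numCycles {x : GW m n} (h : GW.numCycles x = n) : x.perm = 1 := by
  by_contra hc
  have := numCycles_lt hc
  omega

theorem exists_two_cycle (x : GW m n) (hnc : GW.numCycles x = n - 1) (hn : 1 ≤ n) :
    ∃ C₀ ∈ GW.cycles x, C₀.card = 2 ∧ ∀ C ∈ GW.cycles x, C ≠ C₀ → C.card = 1 := by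
  have hall : ∀ C ∈ GW.cycles x, 1 ≤ C.card := fun C hC =>
    Finset.card_pos.2 (cycles_nonempty hC)
  have hsum := sum_card_cycles x
  have h2 : ∃ C₀ ∈ GW.cycles x, 2 ≤ C₀.card := by
    by_contra hc
    push_neg at hc
    have h1 : ∀ C ∈ GW.cycles x, C.card = 1 := fun C hC => by
      have := hall C hC; have := hc C hC; omega
    have := Finset.sum_const_nat h1
    rw [hsum] at this
    have : (GW.cycles x).card = GW.numCycles x := rfl
    omega
  obtain ⟨C₀, hC₀m, hC₀2⟩ := h2
  have hsplit : C₀.card + ∑ C ∈ (GW.cycles x).erase C₀, C.card = n := by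
    rw [Finset.add_sum_erase _ _ hC₀m, hsum]
  have hcard_erase : ((GW.cycles x).erase C₀).card = GW.numCycles x - 1 := by
    rw [Finset.card_erase_of_mem hC₀m]
    rfl
  have hge : ((GW.cycles x).erase C₀).card ≤ ∑ C ∈ (GW.cycles x).erase C₀, C.card := by
    have := Finset.sum_le_sum (s := (GW.cycles x).erase C₀) (f := fun _ => 1) (g := Finset.card)
      (fun C hC => hall C (Finset.mem_of_mem_erase hC))
    simpa using this
  have hnum_pos : 1 ≤ GW.numCycles x := by
    have : C₀ ∈ GW.cycles x := hC₀m
    have := Finset.card_pos.2 ⟨C₀, this⟩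
    exact this
  have hC₀card : C₀.card = 2 := by omega
  refine ⟨C₀, hC₀m, hC₀card, ?_⟩
  intro C hC hne
  by_contra hc1
  have hC2 : 2 ≤ C.card := by
    have := hall C hC
    omega
  have hCe : C ∈ (GW.cycles x).erase C₀ := Finset.mem_erase.2 ⟨hne, hC⟩
  have hsplit2 : C.card + ∑ D ∈ ((GW.cycles x).erase C₀).erase C, D.card
      = ∑ C ∈ (GW.cycles x).erase C₀, C.card := Finset.add_sum_erase _ _ hCe
  have hge2 : (((GW.cycles x).erase C₀).erase C).card
      ≤ ∑ D ∈ ((GW.cycles x).erase C₀).erase C, D.card := by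
    have := Finset.sum_le_sum (s := ((GW.cycles x).erase C₀).erase C) (f := fun _ => 1)
      (g := Finset.card)
      (fun D hD => hall D (Finset.mem_of_mem_erase (Finset.mem_of_mem_erase hD)))
    simpa using this
  have hcard_erase2 : (((GW.cycles x).erase C₀).erase C).card = GW.numCycles x - 1 - 1 := by
    rw [Finset.card_erase_of_mem hCe, hcard_erase]
  have hnum2 : 2 ≤ GW.numCycles x := by
    have := Finset.one_lt_card.2 ⟨C₀, hC₀m, C, hC, fun h => hne h.symm⟩
    omega
  omega

theorem refl_classify {t : GW m n} (h : GW.codimfix t = 1) :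
    (∃ (i : Fin n) (a : ZMod m), a ≠ 0 ∧ t = dw i a) ∨
    (∃ (i j : Fin n) (a : ZMod m), i ≠ j ∧ t = tw i j a) := by
  have hce := codim_eq t
  have hnle := numCycles_le t
  rw [h] at hce
  rcases Nat.lt_or_ge (GW.numCycles t) n with hlt | hge
  · -- transposition case
    right
    have hnc : GW.numCycles t = n - 1 := by omega
    have hNZ : Multiset.card (NZW t) = 0 := by omega
    have hNZ0 : NZW t = 0 := Multiset.card_eq_zero.1 hNZ
    have hz : ∀ C ∈ GW.cycles t, GW.cycWt t C = 0 := by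
      intro C hC
      by_contra hc
      have hmem : GW.cycWt t C ∈ W t := Multiset.mem_map_of_mem _ hC
      have : GW.cycWt t C ∈ NZW t := Multiset.mem_filter.2 ⟨hmem, hc⟩
      rw [hNZ0] at this
      exact absurd this (Multiset.notMem_zero _)
    obtain ⟨C₀, hC₀m, hC₀2, hothers⟩ := exists_two_cycle t hnc (by omega)
    obtain ⟨i, j, hij, hC₀⟩ := Finset.card_eq_two.1 hC₀2
    have hiC₀ : i ∈ C₀ := by rw [hC₀]; exact Finset.mem_insert_self _ _
    have hjC₀ : j ∈ C₀ := by rw [hC₀]; exact Finset.mem_insert_of_mem (Finset.mem_singleton_self _)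
    have hsingle : ∀ k, k ∉ C₀ → cset t.perm k = {k} := by
      intro k hk
      have hCk : cset t.perm k ∈ GW.cycles t := cset_mem_cycles t k
      have hne : cset t.perm k ≠ C₀ := fun he => hk (he ▸ self_mem_cset)
      have h1 := hothers _ hCk hne
      obtain ⟨b, hb⟩ := Finset.card_eq_one.1 h1
      have : k ∈ cset t.perm k := self_mem_cset
      rw [hb] at this ⊢
      rw [Finset.mem_singleton] at this
      rw [this]
    have hσ : t.perm = Equiv.swap i j := by
      apply Equiv.ext
      intro k
      by_cases hk : k ∈ C₀
      · have hC₀k : C₀ = cset t.perm k := eq_cset_of_mem_cycles hC₀m hk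
        have happ : t.perm k ∈ C₀ := hC₀k ▸ apply_mem_cset (hC₀k ▸ hk)
        have hkne : t.perm k ≠ k := by
          intro he
          have := cset_of_fixed he
          rw [← hC₀k] at this
          rw [this] at hC₀2
          simp at hC₀2
        rw [hC₀] at hk happ
        rcases Finset.mem_insert.1 hk with rfl | hk1
        · rcases Finset.mem_insert.1 happ with he | he1
          · exact absurd he hkne
          · rw [Finset.mem_singleton] at he1
            rw [he1, Equiv.swap_apply_left]
        · rw [Finset.mem_singleton] at hk1
          subst hk1
          rcases Finset.mem_insert.1 happ with he | he1
          · rw [he, Equiv.swap_apply_right]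
          · rw [Finset.mem_singleton] at he1
            exact absurd he1 hkne
      · have h1 := hsingle k hk
        have : t.perm k ∈ cset t.perm k := apply_mem_cset self_mem_cset
        rw [h1, Finset.mem_singleton] at this
        have hki : k ≠ i := fun he => hk (he ▸ hiC₀)
        have hkj : k ≠ j := fun he => hk (he ▸ hjC₀)
        rw [this, Equiv.swap_apply_of_ne_of_ne hki hkj]
    have hwij : t.wt i + t.wt j = 0 := by
      have := hz C₀ hC₀m
      rw [GW.cycWt, hC₀, Finset.sum_pair hij] at this
      exact this
    refine ⟨i, j, t.wt i, hij, ?_⟩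
    apply GW.ext
    · rw [hσ]; rfl
    · funext k
      show t.wt k = if k = i then t.wt i else if k = j then -t.wt i else 0
      rcases eq_or_ne k i with rfl | hki
      · rw [if_pos rfl]
      rw [if_neg hki]
      rcases eq_or_ne k j with rfl | hkj
      · rw [if_pos rfl]
        exact eq_neg_of_add_eq_zero_right hwij
      · rw [if_neg hkj]
        have hk : k ∉ C₀ := by
          rw [hC₀]
          intro hh
          rcases Finset.mem_insert.1 hh with he | he1
          · exact hki he
          · exact hkj (Finset.mem_singleton.1 he1)
        have := hz _ (cset_mem_cycles t k)
        rw [hsingle k hk, GW.cycWt, Finset.sum_singleton] at this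
        exact this
  · -- diagonal case
    left
    have hnc : GW.numCycles t = n := le_antisymm hnle hge
    have hperm : t.perm = 1 := perm_eq_one_of_numCycles hnc
    have hNZ : Multiset.card (NZW t) = 1 := by omega
    have hNZW : NZW t = (Finset.univ.val.filter (fun k => t.wt k ≠ 0)).map t.wt := by
      rw [NZW, W_diag hperm, Multiset.filter_map]
      rfl
    have hcard : (Finset.univ.filter (fun k => t.wt k ≠ 0)).card = 1 := by
      have := hNZ
      rw [hNZW, Multiset.card_map] at this
      exact this
    obtain ⟨i, hi⟩ := Finset.card_eq_one.1 hcard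
    have hia : t.wt i ≠ 0 := by
      have : i ∈ Finset.univ.filter (fun k => t.wt k ≠ 0) := by
        rw [hi]; exact Finset.mem_singleton_self _
      exact (Finset.mem_filter.1 this).2
    refine ⟨i, t.wt i, hia, ?_⟩
    apply GW.ext
    · rw [hperm]; rfl
    · funext k
      show t.wt k = if k = i then t.wt i else 0
      rcases eq_or_ne k i with rfl | hki
      · rw [if_pos rfl]
      · rw [if_neg hki]
        by_contra hc
        have : k ∈ Finset.univ.filter (fun k => t.wt k ≠ 0) :=
          Finset.mem_filter.2 ⟨Finset.mem_univ _, hc⟩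
        rw [hi, Finset.mem_singleton] at this
        exact hki this

end GWP


namespace GWP
open PermAux GW
variable {m n : ℕ}

theorem card_W_le (x : GW m n) : Multiset.card (W x) ≤ n := by
  rw [card_W]
  exact numCycles_le x

private theorem nzw_eq (x : GW m n) (s : Multiset (ZMod m)) (h : W x = s) :
    NZW x = Multiset.filter (· ≠ (0 : ZMod m)) s := by rw [NZW, h]

theorem step_mul {x t : GW m n} (ht : GW.codimfix t = 1) :
    GW.codimfix (x * t) ≤ GW.codimfix x + 1 ∧
    (GW.codimfix (x * t) = GW.codimfix x + 1 → NZW x ≤ NZW (x * t)) := by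
  have hcx := codim_W x
  have hcy := codim_W (x * t)
  have hky := card_W_le (x * t)
  rcases refl_classify ht with ⟨i, a, ha, rfl⟩ | ⟨i, j, a, hij, rfl⟩
  · -- diagonal reflection
    obtain ⟨s, hWx, hWy⟩ := diag_gw x i a
    set c := GW.cycWt x (cset x.perm i) with hc
    have hNx := nzw_eq x _ hWx
    have hNy := nzw_eq (x * dw i a) _ hWy
    have k1 : Multiset.card (W x) = Multiset.card s + 1 := by rw [hWx, Multiset.card_cons]
    have k2 : Multiset.card (W (x * dw i a)) = Multiset.card s + 1 := by
      rw [hWy, Multiset.card_cons]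
    by_cases hc0 : c = 0
    · have hca : c + a ≠ 0 := by rw [hc0, zero_add]; exact ha
      rw [Multiset.filter_cons_of_neg _ (by simpa using hc0)] at hNx
      rw [Multiset.filter_cons_of_pos _ (by simpa using hca)] at hNy
      have d1 := congrArg Multiset.card hNx
      have d2 := congrArg Multiset.card hNy
      rw [Multiset.card_cons] at d2
      refine ⟨by omega, fun _ => ?_⟩
      rw [hNx, hNy]
      exact Multiset.le_cons_self _ _
    · rw [Multiset.filter_cons_of_pos _ (by simpa using hc0)] at hNx
      have d1 := congrArg Multiset.card hNx
      rw [Multiset.card_cons] at d1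
      by_cases hca : c + a = 0
      · rw [Multiset.filter_cons_of_neg _ (by simpa using hca)] at hNy
        have d2 := congrArg Multiset.card hNy
        exact ⟨by omega, fun hEq => by omega⟩
      · rw [Multiset.filter_cons_of_pos _ (by simpa using hca)] at hNy
        have d2 := congrArg Multiset.card hNy
        rw [Multiset.card_cons] at d2
        exact ⟨by omega, fun hEq => by omega⟩
  · -- transposition-type reflection
    by_cases hsc : x.perm.SameCycle i j
    · -- split case
      obtain ⟨wA, wB, s, hWx, hWy, -⟩ := split_gw x a hij hsc
      have hNx := nzw_eq x _ hWx
      have hNy := nzw_eq (x * tw i j a) _ hWy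
      have k1 : Multiset.card (W x) = Multiset.card s + 1 := by rw [hWx, Multiset.card_cons]
      have k2 : Multiset.card (W (x * tw i j a)) = Multiset.card s + 2 := by
        rw [hWy, Multiset.card_cons, Multiset.card_cons]
      by_cases hab : wA + wB = 0
      · rw [Multiset.filter_cons_of_neg _ (by simpa using hab)] at hNx
        have d1 := congrArg Multiset.card hNx
        by_cases h1 : wA + a = 0
        · rw [Multiset.filter_cons_of_neg _ (by simpa using h1)] at hNy
          by_cases h2 : wB - a = 0
          · rw [Multiset.filter_cons_of_neg _ (by simpa using h2)] at hNy
            have d2 := congrArg Multiset.card hNy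
            exact ⟨by omega, fun hEq => by omega⟩
          · rw [Multiset.filter_cons_of_pos _ (by simpa using h2)] at hNy
            have d2 := congrArg Multiset.card hNy
            rw [Multiset.card_cons] at d2
            exact ⟨by omega, fun hEq => by omega⟩
        · rw [Multiset.filter_cons_of_pos _ (by simpa using h1)] at hNy
          by_cases h2 : wB - a = 0
          · rw [Multiset.filter_cons_of_neg _ (by simpa using h2)] at hNy
            have d2 := congrArg Multiset.card hNy
            rw [Multiset.card_cons] at d2
            exact ⟨by omega, fun hEq => by omega⟩
          · rw [Multiset.filter_cons_of_pos _ (by simpa using h2)] at hNy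
            have d2 := congrArg Multiset.card hNy
            rw [Multiset.card_cons, Multiset.card_cons] at d2
            refine ⟨by omega, fun _ => ?_⟩
            rw [hNx, hNy]
            exact le_trans (Multiset.le_cons_self _ _) (Multiset.le_cons_self _ _)
      · rw [Multiset.filter_cons_of_pos _ (by simpa using hab)] at hNx
        have d1 := congrArg Multiset.card hNx
        rw [Multiset.card_cons] at d1
        have hnotboth : ¬ (wA + a ≠ 0 ∧ wB - a ≠ 0) ∨ True := Or.inr trivial
        by_cases h1 : wA + a = 0
        · rw [Multiset.filter_cons_of_neg _ (by simpa using h1)] at hNy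
          by_cases h2 : wB - a = 0
          · exfalso
            apply hab
            have : wA + wB = (wA + a) + (wB - a) := by ring
            rw [this, h1, h2, add_zero]
          · rw [Multiset.filter_cons_of_pos _ (by simpa using h2)] at hNy
            have d2 := congrArg Multiset.card hNy
            rw [Multiset.card_cons] at d2
            exact ⟨by omega, fun hEq => by omega⟩
        · rw [Multiset.filter_cons_of_pos _ (by simpa using h1)] at hNy
          by_cases h2 : wB - a = 0
          · rw [Multiset.filter_cons_of_neg _ (by simpa using h2)] at hNy
            have d2 := congrArg Multiset.card hNy
            rw [Multiset.card_cons] at d2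
            exact ⟨by omega, fun hEq => by omega⟩
          · rw [Multiset.filter_cons_of_pos _ (by simpa using h2)] at hNy
            have d2 := congrArg Multiset.card hNy
            rw [Multiset.card_cons, Multiset.card_cons] at d2
            exact ⟨by omega, fun hEq => by omega⟩
    · -- merge case
      obtain ⟨s, hWx, hWy⟩ := merge_gw x a hsc
      set c := GW.cycWt x (cset x.perm i) with hcdef
      set d := GW.cycWt x (cset x.perm j) with hddef
      have hNx := nzw_eq x _ hWx
      have hNy := nzw_eq (x * tw i j a) _ hWy
      have k1 : Multiset.card (W x) = Multiset.card s + 2 := by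
        rw [hWx, Multiset.card_cons, Multiset.card_cons]
      have k2 : Multiset.card (W (x * tw i j a)) = Multiset.card s + 1 := by
        rw [hWy, Multiset.card_cons]
      by_cases hc0 : c = 0
      · by_cases hd0 : d = 0
        · have hcd : c + d = 0 := by rw [hc0, hd0, add_zero]
          rw [Multiset.filter_cons_of_neg _ (by simpa using hc0),
            Multiset.filter_cons_of_neg _ (by simpa using hd0)] at hNx
          rw [Multiset.filter_cons_of_neg _ (by simpa using hcd)] at hNy
          have d1 := congrArg Multiset.card hNx
          have d2 := congrArg Multiset.card hNy
          refine ⟨by omega, fun _ => ?_⟩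
          rw [hNx, hNy]
        · have hcd : c + d ≠ 0 := by rw [hc0, zero_add]; exact hd0
          rw [Multiset.filter_cons_of_neg _ (by simpa using hc0),
            Multiset.filter_cons_of_pos _ (by simpa using hd0)] at hNx
          rw [Multiset.filter_cons_of_pos _ (by simpa using hcd)] at hNy
          have d1 := congrArg Multiset.card hNx
          have d2 := congrArg Multiset.card hNy
          rw [Multiset.card_cons] at d1 d2
          refine ⟨by omega, fun _ => ?_⟩
          rw [hNx, hNy, hc0, zero_add]
      · by_cases hd0 : d = 0
        · have hcd : c + d ≠ 0 := by rw [hd0, add_zero]; exact hc0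
          rw [Multiset.filter_cons_of_pos _ (by simpa using hc0),
            Multiset.filter_cons_of_neg _ (by simpa using hd0)] at hNx
          rw [Multiset.filter_cons_of_pos _ (by simpa using hcd)] at hNy
          have d1 := congrArg Multiset.card hNx
          have d2 := congrArg Multiset.card hNy
          rw [Multiset.card_cons] at d1 d2
          refine ⟨by omega, fun _ => ?_⟩
          rw [hNx, hNy, hd0, add_zero]
        · rw [Multiset.filter_cons_of_pos _ (by simpa using hc0),
            Multiset.filter_cons_of_pos _ (by simpa using hd0)] at hNx
          have d1 := congrArg Multiset.card hNx
          rw [Multiset.card_cons, Multiset.card_cons] at d1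
          by_cases hcd : c + d = 0
          · rw [Multiset.filter_cons_of_neg _ (by simpa using hcd)] at hNy
            have d2 := congrArg Multiset.card hNy
            exact ⟨by omega, fun hEq => by omega⟩
          · rw [Multiset.filter_cons_of_pos _ (by simpa using hcd)] at hNy
            have d2 := congrArg Multiset.card hNy
            rw [Multiset.card_cons] at d2
            exact ⟨by omega, fun hEq => by omega⟩

theorem step_mul_ge {x t : GW m n} (ht : GW.codimfix t = 1) :
    GW.codimfix x ≤ GW.codimfix (x * t) + 1 := by
  have h2 : GW.codimfix t⁻¹ = 1 := by rw [codim_inv]; exact ht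
  have := (step_mul (x := x * t) h2).1
  rwa [mul_inv_cancel_right] at this

theorem chain_le (x : GW m n) (l : List (GW m n)) (hl : ∀ t ∈ l, GW.codimfix t = 1) :
    GW.codimfix (x * l.prod) ≤ GW.codimfix x + l.length := by
  induction l generalizing x with
  | nil => simp
  | cons t l' ih =>
    have h1 : x * (t :: l').prod = (x * t) * l'.prod := by
      rw [List.prod_cons, mul_assoc]
    rw [h1]
    have h2 := ih (x * t) (fun u hu => hl u (List.mem_cons_of_mem _ hu))
    have h3 := (step_mul (x := x) (hl t (List.mem_cons_self))).1
    simp only [List.length_cons]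
    omega

theorem prod_codim_le (l : List (GW m n)) (hl : ∀ t ∈ l, GW.codimfix t = 1) :
    GW.codimfix l.prod ≤ l.length := by
  have := chain_le 1 l hl
  rwa [one_mul, codim_one, zero_add] at this

theorem chain_mono (x : GW m n) (l : List (GW m n)) (hl : ∀ t ∈ l, GW.codimfix t = 1)
    (heq : GW.codimfix (x * l.prod) = GW.codimfix x + l.length) :
    NZW x ≤ NZW (x * l.prod) := by
  induction l generalizing x with
  | nil => simp
  | cons t l' ih =>
    have h1 : x * (t :: l').prod = (x * t) * l'.prod := by
      rw [List.prod_cons, mul_assoc]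
    have hl' : ∀ u ∈ l', GW.codimfix u = 1 := fun u hu => hl u (List.mem_cons_of_mem _ hu)
    have ht : GW.codimfix t = 1 := hl t (List.mem_cons_self)
    rw [h1] at heq
    have h2 := chain_le (x * t) l' hl'
    have h3 := (step_mul (x := x) ht).1
    rw [List.length_cons] at heq
    have hxt : GW.codimfix (x * t) = GW.codimfix x + 1 := by omega
    have h4 : GW.codimfix ((x * t) * l'.prod) = GW.codimfix (x * t) + l'.length := by omega
    calc NZW x ≤ NZW (x * t) := (step_mul ht).2 hxt
      _ ≤ NZW ((x * t) * l'.prod) := ih (x * t) hl' h4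
      _ = NZW (x * (t :: l').prod) := by rw [h1]

end GWP


namespace GWP
open PermAux GW
variable {m n : ℕ}

theorem W_one_zero : ∀ c ∈ W (1 : GW m n), c = 0 := by
  intro c hc
  obtain ⟨C, -, rfl⟩ := Multiset.mem_map.1 hc
  rw [GW.cycWt]
  apply Finset.sum_eq_zero
  intro k _
  rfl

theorem not_sameCycle_one {i j : Fin n} (hij : i ≠ j) :
    ¬ (1 : Equiv.Perm (Fin n)).SameCycle i j := by
  intro h
  have : j ∈ cset (1 : Equiv.Perm (Fin n)) i := mem_cset.2 h
  rw [cset_one, Finset.mem_singleton] at this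
  exact hij this.symm

theorem codim_tw {i j : Fin n} (hij : i ≠ j) (a : ZMod m) :
    GW.codimfix (tw i j a) = 1 := by
  obtain ⟨s, hWx, hWy⟩ := merge_gw (1 : GW m n) a (not_sameCycle_one hij)
  rw [one_mul] at hWy
  have hk : Multiset.card (W (1 : GW m n)) = n := by rw [card_W, numCycles_diag rfl]
  have hk1 : Multiset.card s + 2 = n := by
    have h2 := congrArg Multiset.card hWx
    rw [Multiset.card_cons, Multiset.card_cons, hk] at h2
    omega
  have hzero : ∀ c ∈ s, c = (0 : ZMod m) := fun c hc => W_one_zero c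
    (by rw [hWx]; exact Multiset.mem_cons_of_mem (Multiset.mem_cons_of_mem hc))
  have hhead : GW.cycWt (1 : GW m n) (cset (1 : GW m n).perm i)
      + GW.cycWt (1 : GW m n) (cset (1 : GW m n).perm j) = 0 := by
    have hzi := W_one_zero (GW.cycWt (1 : GW m n) (cset (1 : GW m n).perm i))
      (by rw [hWx]; exact Multiset.mem_cons_self _ _)
    have hzj := W_one_zero (GW.cycWt (1 : GW m n) (cset (1 : GW m n).perm j))
      (by rw [hWx]; exact Multiset.mem_cons_of_mem (Multiset.mem_cons_self _ _))
    rw [hzi, hzj, add_zero]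
  have hNy : NZW (tw i j a) = 0 := by
    rw [NZW, hWy, Multiset.filter_cons_of_neg _ (by simpa using hhead),
      Multiset.filter_eq_nil.2 (fun c hc => by simpa using hzero c hc)]
  have hcy := codim_W (tw i j a)
  have hky : Multiset.card (W (tw i j a)) = Multiset.card s + 1 := by
    rw [hWy, Multiset.card_cons]
  rw [hNy] at hcy
  simp only [Multiset.card_zero] at hcy
  omega

theorem wt_filter_card (z : GW m n) (h : z.perm = 1) :
    Multiset.card (NZW z) = (Finset.univ.filter (fun k => z.wt k ≠ 0)).card := by
  rw [NZW, W_diag h, Multiset.filter_map, Multiset.card_map]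
  rfl

theorem codim_dw {i : Fin n} {a : ZMod m} (ha : a ≠ 0) :
    GW.codimfix (dw i a) = 1 := by
  rw [codim_diag rfl, wt_filter_card _ rfl]
  have : Finset.univ.filter (fun k => (dw i a).wt k ≠ 0) = {i} := by
    ext k
    simp only [Finset.mem_filter, Finset.mem_univ, true_and, Finset.mem_singleton]
    show ¬ (if k = i then a else 0) = 0 ↔ k = i
    rcases eq_or_ne k i with rfl | hk
    · simpa using ha
    · simp [hk]
  rw [this, Finset.card_singleton]

theorem wtTot_dw (i : Fin n) (a : ZMod m) : GW.wtTot (dw i a) = a := by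
  rw [GW.wtTot]
  have := dw_wt_sum i a Finset.univ
  rw [if_pos (Finset.mem_univ i)] at this
  exact this

theorem Gmem_dw {p : ℕ} {hpm : p ∣ m} {i : Fin n} {a : ZMod m}
    (hpa : ZMod.castHom hpm (ZMod p) a = 0) : GW.Gmem p hpm (dw i a) := by
  rw [GW.Gmem, wtTot_dw]
  exact hpa

theorem IsRefl_tw {p : ℕ} {hpm : p ∣ m} {i j : Fin n} (hij : i ≠ j) (a : ZMod m) :
    GW.IsRefl p hpm (tw i j a) := ⟨Gmem_tw hij a, codim_tw hij a⟩

theorem IsRefl_dw {p : ℕ} {hpm : p ∣ m} {i : Fin n} {a : ZMod m} (ha : a ≠ 0)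
    (hpa : ZMod.castHom hpm (ZMod p) a = 0) : GW.IsRefl p hpm (dw i a) :=
  ⟨Gmem_dw hpa, codim_dw ha⟩

theorem tw_mul_self (i j : Fin n) (a : ZMod m) (hij : i ≠ j) :
    tw i j a * tw i j a = 1 := by
  apply GW.ext
  · show Equiv.swap i j * Equiv.swap i j = 1
    rw [Equiv.swap_mul_self]
  · funext k
    show (tw i j a).wt k + (tw i j a).wt ((Equiv.swap i j)⁻¹ k) = 0
    have hw : ∀ l, (tw i j a).wt l = if l = i then a else if l = j then -a else 0 :=
      fun l => rfl
    rw [Equiv.swap_inv]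
    by_cases hki : k = i
    · rw [hki, Equiv.swap_apply_left]
      simp [hw, hij.symm]
    by_cases hkj : k = j
    · rw [hkj, Equiv.swap_apply_right]
      simp [hw, hij.symm]
    · rw [Equiv.swap_apply_of_ne_of_ne hki hkj]
      simp [hw, hki, hkj]

end GWP


namespace GWP
open PermAux GW
variable {m n : ℕ}

/-- Multisets that can be partitioned into `p`-divisible singletons and zero-sum pairs. -/
inductive PairM (p : ℕ) {m : ℕ} (hpm : p ∣ m) : Multiset (ZMod m) → Prop
  | nil : PairM p hpm 0
  | single (a : ZMod m) (s : Multiset (ZMod m)) (ha : ZMod.castHom hpm (ZMod p) a = 0)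
      (hs : PairM p hpm s) : PairM p hpm (a ::ₘ s)
  | pair (a b : ZMod m) (s : Multiset (ZMod m)) (hab : a + b = 0)
      (hs : PairM p hpm s) : PairM p hpm (a ::ₘ b ::ₘ s)

theorem pairM_one (hm : (1 : ℕ) ∣ m) (s : Multiset (ZMod m)) : PairM 1 hm s := by
  induction s using Multiset.induction with
  | empty => exact PairM.nil
  | cons a s ih => exact PairM.single a s (Subsingleton.elim _ _) ih

@[simp] theorem dw_wt (i : Fin n) (a : ZMod m) (k : Fin n) :
    (dw i a).wt k = if k = i then a else 0 := rfl

theorem nzw_zero {z z₁ : GW m n} (hz : z.perm = 1) (hz₁ : z₁.perm = 1) (i : Fin n)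
    (hw : ∀ k, z₁.wt k = if k = i then 0 else z.wt k) (hc : z.wt i ≠ 0) :
    NZW z = z.wt i ::ₘ NZW z₁ := by
  have hu : (Finset.univ : Finset (Fin n)).val
      = i ::ₘ (Finset.univ.erase i).val := finset_val_cons (Finset.mem_univ i)
  have hmapeq : (Finset.univ.erase i).val.map z₁.wt = (Finset.univ.erase i).val.map z.wt := by
    apply Multiset.map_congr rfl
    intro k hk
    have hki : k ≠ i := (Finset.mem_erase.1 (Finset.mem_def.2 hk)).1
    rw [hw k, if_neg hki]
  rw [NZW, NZW, W_diag hz, W_diag hz₁, hu, Multiset.map_cons, Multiset.map_cons,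
    Multiset.filter_cons_of_pos _ (by simpa using hc),
    hw i, if_pos rfl, Multiset.filter_cons_of_neg _ (by simp), hmapeq]

theorem nzw_all_zero {z : GW m n} (hz : z.perm = 1) (hNZ : NZW z = 0) : z = 1 := by
  have hwt : ∀ k, z.wt k = 0 := by
    intro k
    by_contra hc
    have hmem : z.wt k ∈ NZW z := by
      rw [NZW, W_diag hz]
      exact Multiset.mem_filter.2 ⟨Multiset.mem_map_of_mem _ (Finset.mem_univ k), hc⟩
    rw [hNZ] at hmem
    exact Multiset.notMem_zero _ hmem
  apply GW.ext
  · rw [hz]; rfl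
  · funext k
    rw [hwt k]
    rfl

theorem nzw_mem_pos {z : GW m n} (hz : z.perm = 1) {a : ZMod m} (ha : a ∈ NZW z) :
    a ≠ 0 ∧ ∃ i, z.wt i = a := by
  have h1 := Multiset.of_mem_filter ha
  have h2 := Multiset.mem_of_mem_filter ha
  rw [W_diag hz] at h2
  obtain ⟨i, -, hi⟩ := Multiset.mem_map.1 h2
  exact ⟨by simpa using h1, i, hi⟩

theorem fact_diag {p : ℕ} (hpm : p ∣ m) (s : Multiset (ZMod m)) (hs : PairM p hpm s) :
    ∀ z : GW m n, z.perm = 1 → NZW z = s →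
    ∃ l : List (GW m n), (∀ t ∈ l, GW.IsRefl p hpm t) ∧ l.length = GW.codimfix z
      ∧ l.prod = z := by
  induction hs with
  | nil =>
    intro z hz hNZ
    refine ⟨[], by simp, ?_, ?_⟩
    · rw [codim_diag hz, hNZ]
      rfl
    · rw [List.prod_nil, nzw_all_zero hz hNZ]
  | single a s' ha hs' ih =>
    intro z hz hNZ
    have hamem : a ∈ NZW z := by rw [hNZ]; exact Multiset.mem_cons_self _ _
    obtain ⟨ha0, i, hia⟩ := nzw_mem_pos hz hamem
    set z₁ : GW m n := ⟨z.perm, fun k => if k = i then 0 else z.wt k⟩ with hz₁def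
    have hz₁p : z₁.perm = 1 := hz
    have h0 : NZW z = z.wt i ::ₘ NZW z₁ :=
      nzw_zero hz hz₁p i (fun k => rfl) (by rw [hia]; exact ha0)
    rw [hia, hNZ] at h0
    have hNZ₁ : NZW z₁ = s' := ((Multiset.cons_inj_right a).1 h0.symm)
    obtain ⟨l₁, hl₁r, hl₁len, hl₁prod⟩ := ih z₁ hz₁p hNZ₁
    refine ⟨l₁ ++ [dw i a], ?_, ?_, ?_⟩
    · intro t ht
      rcases List.mem_append.1 ht with h | h
      · exact hl₁r t h
      · rw [List.mem_singleton.1 h]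
        exact IsRefl_dw ha0 ha
    · rw [List.length_append, List.length_singleton, hl₁len, codim_diag hz,
        codim_diag hz₁p, hNZ, hNZ₁, Multiset.card_cons]
    · rw [List.prod_append, List.prod_singleton, hl₁prod]
      apply GW.ext
      · show z₁.perm * (1 : Equiv.Perm (Fin n)) = z.perm
        rw [mul_one]
      · funext k
        show z₁.wt k + (dw i a).wt (z₁.perm⁻¹ k) = z.wt k
        rw [hz₁p, inv_one]
        show (if k = i then 0 else z.wt k) + (if k = i then a else 0) = z.wt k
        rcases eq_or_ne k i with rfl | hk
        · rw [if_pos rfl, if_pos rfl, zero_add, hia]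
        · rw [if_neg hk, if_neg hk, add_zero]
  | pair a b s' hab hs' ih =>
    intro z hz hNZ
    have hamem : a ∈ NZW z := by rw [hNZ]; exact Multiset.mem_cons_self _ _
    obtain ⟨ha0, i, hia⟩ := nzw_mem_pos hz hamem
    set z₁ : GW m n := ⟨z.perm, fun k => if k = i then 0 else z.wt k⟩ with hz₁def
    have hz₁p : z₁.perm = 1 := hz
    have h0 : NZW z = z.wt i ::ₘ NZW z₁ :=
      nzw_zero hz hz₁p i (fun k => rfl) (by rw [hia]; exact ha0)
    rw [hia, hNZ] at h0
    have hNZ₁ : NZW z₁ = b ::ₘ s' := ((Multiset.cons_inj_right a).1 h0.symm)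
    have hbmem : b ∈ NZW z₁ := by rw [hNZ₁]; exact Multiset.mem_cons_self _ _
    obtain ⟨hb0, j, hjb⟩ := nzw_mem_pos hz₁p hbmem
    have hji : j ≠ i := by
      intro he
      apply hb0
      rw [← hjb, he]
      show (if i = i then 0 else z.wt i) = 0
      rw [if_pos rfl]
    have hjb' : z.wt j = b := by
      rw [← hjb]
      show z.wt j = if j = i then 0 else z.wt j
      rw [if_neg hji]
    set z₂ : GW m n := ⟨z.perm, fun k => if k = j then 0 else z₁.wt k⟩ with hz₂def
    have hz₂p : z₂.perm = 1 := hz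
    have h1 : NZW z₁ = z₁.wt j ::ₘ NZW z₂ :=
      nzw_zero hz₁p hz₂p j (fun k => rfl) (by rw [hjb]; exact hb0)
    rw [hjb, hNZ₁] at h1
    have hNZ₂ : NZW z₂ = s' := ((Multiset.cons_inj_right b).1 h1.symm)
    obtain ⟨l₂, hl₂r, hl₂len, hl₂prod⟩ := ih z₂ hz₂p hNZ₂
    have hij : i ≠ j := fun he => hji he.symm
    refine ⟨l₂ ++ [tw i j a, tw i j 0], ?_, ?_, ?_⟩
    · intro t ht
      rcases List.mem_append.1 ht with h | h
      · exact hl₂r t h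
      rcases List.mem_cons.1 h with h' | h'
      · rw [h']; exact IsRefl_tw hij a
      · rw [List.mem_singleton.1 h']; exact IsRefl_tw hij 0
    · rw [List.length_append, hl₂len, codim_diag hz, codim_diag hz₂p, hNZ, hNZ₂,
        Multiset.card_cons, Multiset.card_cons]
      rfl
    · rw [List.prod_append, List.prod_cons, List.prod_singleton, hl₂prod, ← mul_assoc]
      apply GW.ext
      · show (z₂.perm * Equiv.swap i j) * Equiv.swap i j = z.perm
        rw [mul_assoc, Equiv.swap_mul_self, mul_one]
      · funext k
        show (z₂ * tw i j a).wt k + (tw i j 0).wt ((z₂.perm * Equiv.swap i j)⁻¹ k) = z.wt k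
        have hz₂wt : ∀ l, z₂.wt l = if l = j then 0 else if l = i then 0 else z.wt l :=
          fun l => rfl
        have h2 : (z₂ * tw i j a).wt k = z₂.wt k + (tw i j a).wt k := by
          show z₂.wt k + (tw i j a).wt (z₂.perm⁻¹ k) = _
          rw [hz₂p, inv_one]
          rfl
        have h3 : ∀ l, (tw i j (0 : ZMod m)).wt l = 0 := by
          intro l
          show (if l = i then 0 else if l = j then -0 else 0) = 0
          rcases eq_or_ne l i with rfl | h4
          · rw [if_pos rfl]
          rcases eq_or_ne l j with rfl | h5
          · rw [if_neg h4, if_pos rfl, neg_zero]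
          · rw [if_neg h4, if_neg h5]
        rw [h2, h3, add_zero, hz₂wt]
        show _ + (if k = i then a else if k = j then -a else 0) = z.wt k
        rcases eq_or_ne k i with rfl | hki
        · rw [if_neg hij, if_pos rfl, if_pos rfl, zero_add, hia]
        rcases eq_or_ne k j with rfl | hkj
        · rw [if_pos rfl, if_neg hki, if_pos rfl, zero_add, hjb']
          exact (eq_neg_of_add_eq_zero_right hab).symm
        · rw [if_neg hkj, if_neg hki, if_neg hki, if_neg hkj, add_zero]

end GWP


namespace GWP
open PermAux GW
variable {m n : ℕ}

theorem perm_exists_ne {z : GW m n} (hz : z.perm ≠ 1) : ∃ i, z.perm i ≠ i := by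
  by_contra hc
  push_neg at hc
  exact hz (Equiv.ext hc)

/-- The peeling step: removing a fixed point from a nontrivial cycle. -/
theorem peel {z : GW m n} (hz : z.perm ≠ 1) :
    ∃ (z' : GW m n) (i j : Fin n) (a : ZMod m), i ≠ j ∧
      z = z' * tw i j a ∧ NZW z' = NZW z ∧ GW.codimfix z = GW.codimfix z' + 1 ∧
      z'.perm.support.card < z.perm.support.card := by
  obtain ⟨i, hi⟩ := perm_exists_ne hz
  set σ := z.perm with hσ
  set j := σ i with hj
  have hij : i ≠ j := fun h => hi h.symm
  have hsc : σ.SameCycle i j := ⟨1, by rw [zpow_one]⟩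
  set a := -z.wt j with ha
  obtain ⟨wA, wB, s, hWx, hWy, hfix⟩ := split_gw z a hij hsc
  have hwA : wA = z.wt j := hfix rfl
  have e1 : wA + a = 0 := by rw [hwA, ha, add_neg_cancel]
  have e2 : wB - a = wA + wB := by rw [hwA, ha]; ring
  rw [e1, e2] at hWy
  set z' := z * tw i j a with hz'
  have hN1 : NZW z' = NZW z := by
    rw [NZW, NZW, hWx, hWy, Multiset.filter_cons_of_neg _ (by simp)]
  have hcodim : GW.codimfix z = GW.codimfix z' + 1 := by
    have hcx := codim_W z
    have hcy := codim_W z'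
    have k1 : Multiset.card (W z) = Multiset.card s + 1 := by rw [hWx, Multiset.card_cons]
    have k2 : Multiset.card (W z') = Multiset.card s + 2 := by
      rw [hWy, Multiset.card_cons, Multiset.card_cons]
    have hky := card_W_le z'
    rw [hN1] at hcy
    omega
  have hji : σ j ≠ j := by
    intro h
    exact hi (Equiv.injective σ h)
  have hfixj : z'.perm j = j := by
    show (σ * Equiv.swap i j) j = j
    rw [Equiv.Perm.mul_apply, Equiv.swap_apply_right, hj]
  have hsub : z'.perm.support ⊆ σ.support.erase j := by
    intro k hk
    have hk1 : z'.perm k ≠ k := Equiv.Perm.mem_support.1 hk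
    have hkj : k ≠ j := by
      intro h
      rw [h] at hk1
      exact hk1 hfixj
    refine Finset.mem_erase.2 ⟨hkj, Equiv.Perm.mem_support.2 ?_⟩
    intro hfk
    have hki : k ≠ i := by
      intro h
      rw [h] at hfk
      exact hi hfk
    apply hk1
    show (σ * Equiv.swap i j) k = k
    rw [Equiv.Perm.mul_apply, Equiv.swap_apply_of_ne_of_ne hki hkj, hfk]
  have hcard : z'.perm.support.card < σ.support.card := by
    have h1 := Finset.card_le_card hsub
    have h2 : j ∈ σ.support := Equiv.Perm.mem_support.2 hji
    have h3 := Finset.card_erase_of_mem h2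
    have h4 : 0 < σ.support.card := Finset.card_pos.2 ⟨j, h2⟩
    omega
  refine ⟨z', i, j, a, hij, ?_, hN1, hcodim, hcard⟩
  rw [hz', mul_assoc, tw_mul_self i j a hij, mul_one]

theorem fact {p : ℕ} (hpm : p ∣ m) :
    ∀ (N : ℕ) (z : GW m n), z.perm.support.card ≤ N → PairM p hpm (NZW z) →
    ∃ l : List (GW m n), (∀ t ∈ l, GW.IsRefl p hpm t) ∧ l.length = GW.codimfix z
      ∧ l.prod = z := by
  intro N
  induction N with
  | zero =>
    intro z hN hp
    have hz : z.perm = 1 := by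
      have : z.perm.support = ∅ := Finset.card_eq_zero.1 (Nat.le_zero.1 hN)
      exact Equiv.Perm.support_eq_empty_iff.1 this
    exact fact_diag hpm _ hp z hz rfl
  | succ N ih =>
    intro z hN hp
    by_cases hz : z.perm = 1
    · exact fact_diag hpm _ hp z hz rfl
    · obtain ⟨z', i, j, a, hij, hzz', hN1, hcodim, hcard⟩ := peel hz
      obtain ⟨l', hl'r, hl'len, hl'prod⟩ := ih z' (by omega) (by rw [hN1]; exact hp)
      refine ⟨l' ++ [tw i j a], ?_, ?_, ?_⟩
      · intro t ht
        rcases List.mem_append.1 ht with h | h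
        · exact hl'r t h
        · rw [List.mem_singleton.1 h]
          exact IsRefl_tw hij a
      · rw [List.length_append, List.length_singleton, hl'len, hcodim]
      · rw [List.prod_append, List.prod_singleton, hl'prod, ← hzz']

/-- Factorization of a pairable element into `codimfix` reflections. -/
theorem fact' {p : ℕ} (hpm : p ∣ m) (z : GW m n) (hp : PairM p hpm (NZW z)) :
    ∃ l : List (GW m n), (∀ t ∈ l, GW.IsRefl p hpm t) ∧ l.length = GW.codimfix z
      ∧ l.prod = z :=
  fact hpm z.perm.support.card z le_rfl hp

end GWP


namespace GWP
open PermAux GW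
variable {m n : ℕ}

theorem gen_diag {p : ℕ} (hpm : p ∣ m) :
    ∀ (N : ℕ) (z : GW m n), z.perm = 1 → GW.Gmem p hpm z →
      (Finset.univ.filter (fun k => z.wt k ≠ 0)).card ≤ N →
    ∃ l : List (GW m n), (∀ t ∈ l, GW.IsRefl p hpm t) ∧ l.prod = z := by
  intro N
  induction N with
  | zero =>
    intro z hz hg hN
    have hempty : Finset.univ.filter (fun k => z.wt k ≠ 0) = ∅ :=
      Finset.card_eq_zero.1 (Nat.le_zero.1 hN)
    have hwt : ∀ k, z.wt k = 0 := by
      intro k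
      by_contra hc
      have : k ∈ Finset.univ.filter (fun k => z.wt k ≠ 0) :=
        Finset.mem_filter.2 ⟨Finset.mem_univ _, hc⟩
      rw [hempty] at this
      exact absurd this (Finset.notMem_empty _)
    refine ⟨[], by simp, ?_⟩
    rw [List.prod_nil]
    exact (GW.ext (x := z) (by rw [hz]; rfl) (funext fun k => by rw [hwt k]; rfl)).symm
  | succ N ih =>
    intro z hz hg hN
    set F := Finset.univ.filter (fun k => z.wt k ≠ 0) with hF
    rcases Nat.lt_or_ge F.card 2 with hlt | hge
    · rcases Nat.eq_zero_or_pos F.card with h0 | h1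
      · have hle : F.card ≤ N := by omega
        exact ih z hz hg hle
      · -- exactly one nonzero weight
        have hc1 : F.card = 1 := by omega
        obtain ⟨i, hi⟩ := Finset.card_eq_one.1 hc1
        have hiF : i ∈ F := by rw [hi]; exact Finset.mem_singleton_self _
        have hwi : z.wt i ≠ 0 := (Finset.mem_filter.1 hiF).2
        have hother : ∀ k, k ≠ i → z.wt k = 0 := by
          intro k hk
          by_contra hc
          have : k ∈ F := Finset.mem_filter.2 ⟨Finset.mem_univ _, hc⟩
          rw [hi, Finset.mem_singleton] at this
          exact hk this
        have hTot : GW.wtTot z = z.wt i := by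
          rw [GW.wtTot]
          apply Finset.sum_eq_single i (fun k _ hk => hother k hk)
          intro h
          exact absurd (Finset.mem_univ i) h
        have hcast : ZMod.castHom hpm (ZMod p) (z.wt i) = 0 := by
          rw [← hTot]
          exact hg
        refine ⟨[dw i (z.wt i)], ?_, ?_⟩
        · intro t ht
          rw [List.mem_singleton.1 ht]
          exact IsRefl_dw hwi hcast
        · rw [List.prod_singleton]
          have hwteq : z.wt = (dw i (z.wt i)).wt := by
            funext k
            show z.wt k = if k = i then z.wt i else 0
            rcases eq_or_ne k i with rfl | hk
            · rw [if_pos rfl]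
            · rw [if_neg hk, hother k hk]
          exact (GW.ext (x := z) (by rw [hz]; rfl) hwteq).symm
    · -- at least two nonzero weights
      obtain ⟨i, hiF, j, hjF, hij⟩ := Finset.one_lt_card.1 hge
      set z₂ : GW m n := ⟨z.perm,
        fun k => if k = i then 0 else if k = j then z.wt i + z.wt j else z.wt k⟩ with hz₂
      have hz₂p : z₂.perm = 1 := hz
      have hzeq : z = z₂ * tw i j (z.wt i) * tw i j 0 := by
        apply GW.ext
        · show z.perm = (z₂.perm * Equiv.swap i j) * Equiv.swap i j
          rw [mul_assoc, Equiv.swap_mul_self, mul_one]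
        · funext k
          show z.wt k = (z₂ * tw i j (z.wt i)).wt k
            + (tw i j (0 : ZMod m)).wt ((z₂.perm * Equiv.swap i j)⁻¹ k)
          have h3 : ∀ l, (tw i j (0 : ZMod m)).wt l = 0 := by
            intro l
            show (if l = i then 0 else if l = j then -0 else 0) = 0
            rcases eq_or_ne l i with rfl | h4
            · rw [if_pos rfl]
            rcases eq_or_ne l j with rfl | h5
            · rw [if_neg h4, if_pos rfl, neg_zero]
            · rw [if_neg h4, if_neg h5]
          rw [h3, add_zero]
          show z.wt k = z₂.wt k + (tw i j (z.wt i)).wt (z₂.perm⁻¹ k)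
          rw [hz₂p, inv_one]
          show z.wt k = (if k = i then 0 else if k = j then z.wt i + z.wt j else z.wt k)
            + (if k = i then z.wt i else if k = j then -z.wt i else 0)
          rcases eq_or_ne k i with rfl | hki
          · rw [if_pos rfl, if_pos rfl, zero_add]
          rcases eq_or_ne k j with rfl | hkj
          · rw [if_neg hki, if_pos rfl, if_neg hki, if_pos rfl]
            ring
          · rw [if_neg hki, if_neg hkj, if_neg hki, if_neg hkj, add_zero]
      have hg₂ : GW.Gmem p hpm z₂ := by
        have he : z₂ * (tw i j (z.wt i) * tw i j 0) = z := by rw [← mul_assoc, ← hzeq]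
        have he2 : z₂ = z * (tw i j (z.wt i) * tw i j 0)⁻¹ := eq_mul_inv_of_mul_eq he
        rw [he2]
        exact Gmem_mul hg (Gmem_inv (Gmem_mul (Gmem_tw hij _) (Gmem_tw hij 0)))
      have hsub : Finset.univ.filter (fun k => z₂.wt k ≠ 0) ⊆ F.erase i := by
        intro k hk
        have hk2 : z₂.wt k ≠ 0 := (Finset.mem_filter.1 hk).2
        have hki : k ≠ i := by
          intro he
          apply hk2
          rw [he]
          show (if i = i then 0 else if i = j then z.wt i + z.wt j else z.wt i) = 0
          rw [if_pos rfl]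
        refine Finset.mem_erase.2 ⟨hki, ?_⟩
        rcases eq_or_ne k j with rfl | hkj
        · exact hjF
        · refine Finset.mem_filter.2 ⟨Finset.mem_univ _, ?_⟩
          intro hc
          apply hk2
          show (if k = i then 0 else if k = j then z.wt i + z.wt j else z.wt k) = 0
          rw [if_neg hki, if_neg hkj, hc]
      have hcard2 : (Finset.univ.filter (fun k => z₂.wt k ≠ 0)).card ≤ N := by
        have h1 := Finset.card_le_card hsub
        have h2 := Finset.card_erase_of_mem hiF
        omega
      obtain ⟨l₂, hl₂r, hl₂prod⟩ := ih z₂ hz₂p hg₂ hcard2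
      refine ⟨l₂ ++ [tw i j (z.wt i), tw i j 0], ?_, ?_⟩
      · intro t ht
        rcases List.mem_append.1 ht with h | h
        · exact hl₂r t h
        rcases List.mem_cons.1 h with h' | h'
        · rw [h']; exact IsRefl_tw hij _
        · rw [List.mem_singleton.1 h']; exact IsRefl_tw hij 0
      · rw [List.prod_append, List.prod_cons, List.prod_singleton, hl₂prod, ← mul_assoc,
          ← hzeq]

theorem gen {p : ℕ} (hpm : p ∣ m) :
    ∀ (N : ℕ) (z : GW m n), z.perm.support.card ≤ N → GW.Gmem p hpm z →
    ∃ l : List (GW m n), (∀ t ∈ l, GW.IsRefl p hpm t) ∧ l.prod = z := by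
  intro N
  induction N with
  | zero =>
    intro z hN hg
    have hz : z.perm = 1 := Equiv.Perm.support_eq_empty_iff.1
      (Finset.card_eq_zero.1 (Nat.le_zero.1 hN))
    exact gen_diag hpm _ z hz hg le_rfl
  | succ N ih =>
    intro z hN hg
    by_cases hz : z.perm = 1
    · exact gen_diag hpm _ z hz hg le_rfl
    · obtain ⟨z', i, j, a, hij, hzz', hN1, hcodim, hcard⟩ := peel hz
      have hg' : GW.Gmem p hpm z' := by
        have he2 : z' = z * (tw i j a)⁻¹ := eq_mul_inv_of_mul_eq hzz'.symm
        rw [he2]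
        exact Gmem_mul hg (Gmem_inv (Gmem_tw hij a))
      obtain ⟨l', hl'r, hl'prod⟩ := ih z' (by omega) hg'
      refine ⟨l' ++ [tw i j a], ?_, ?_⟩
      · intro t ht
        rcases List.mem_append.1 ht with h | h
        · exact hl'r t h
        · rw [List.mem_singleton.1 h]
          exact IsRefl_tw hij a
      · rw [List.prod_append, List.prod_singleton, hl'prod, ← hzz']

theorem gen' {p : ℕ} (hpm : p ∣ m) (z : GW m n) (hg : GW.Gmem p hpm z) :
    ∃ l : List (GW m n), (∀ t ∈ l, GW.IsRefl p hpm t) ∧ l.prod = z :=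
  gen hpm z.perm.support.card z le_rfl hg

theorem lr_le {p : ℕ} {hpm : p ∣ m} {z : GW m n} (hp : PairM p hpm (NZW z)) :
    GW.lR p hpm z ≤ GW.codimfix z := by
  obtain ⟨l, h1, h2, h3⟩ := fact' hpm z hp
  exact Nat.sInf_le ⟨l, h1, h2, h3⟩

theorem lr_ge {p : ℕ} {hpm : p ∣ m} {z : GW m n} (hz : GW.Gmem p hpm z) :
    GW.codimfix z ≤ GW.lR p hpm z := by
  obtain ⟨l, hl, hprod⟩ := gen' hpm z hz
  have hne : {k | ∃ l : List (GW m n), (∀ t ∈ l, GW.IsRefl p hpm t) ∧ l.length = k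
      ∧ l.prod = z}.Nonempty := ⟨l.length, l, hl, rfl, hprod⟩
  obtain ⟨l', hl', hlen', hprod'⟩ := Nat.sInf_mem hne
  calc GW.codimfix z = GW.codimfix l'.prod := by rw [hprod']
    _ ≤ l'.length := prod_codim_le l' (fun t ht => (hl' t ht).2)
    _ = GW.lR p hpm z := hlen'

theorem lr_eq {p : ℕ} {hpm : p ∣ m} {z : GW m n} (hz : GW.Gmem p hpm z)
    (hp : PairM p hpm (NZW z)) : GW.lR p hpm z = GW.codimfix z :=
  le_antisymm (lr_le hp) (lr_ge hz)

theorem lr_mem {p : ℕ} {hpm : p ∣ m} {z : GW m n} (hz : GW.Gmem p hpm z) :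
    ∃ l : List (GW m n), (∀ t ∈ l, GW.IsRefl p hpm t) ∧ l.length = GW.lR p hpm z
      ∧ l.prod = z := by
  obtain ⟨l, hl, hprod⟩ := gen' hpm z hz
  have hne : {k | ∃ l : List (GW m n), (∀ t ∈ l, GW.IsRefl p hpm t) ∧ l.length = k
      ∧ l.prod = z}.Nonempty := ⟨l.length, l, hl, rfl, hprod⟩
  exact Nat.sInf_mem hne

end GWP


namespace GWP
open PermAux GW
variable {m n : ℕ}

theorem pairM_of_le {p : ℕ} (hpm : p ∣ m) {z w : GW m n} (hle : NZW z ≤ NZW w)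
    (hz : GW.Gmem p hpm z)
    (hw2 : Multiset.card (NZW w) ≤ 1 ∨ ∃ b : ZMod m, NZW w = b ::ₘ {-b}) :
    PairM p hpm (NZW z) := by
  have hcard := Multiset.card_le_card hle
  have hsum : (NZW z).sum = GW.wtTot z := NZW_sum z
  have hsingle : Multiset.card (NZW z) = 1 → PairM p hpm (NZW z) := by
    intro h1
    obtain ⟨a, ha⟩ := Multiset.card_eq_one.1 h1
    have htot : GW.wtTot z = a := by rw [← hsum, ha, Multiset.sum_singleton]
    have hcast : ZMod.castHom hpm (ZMod p) a = 0 := by rw [← htot]; exact hz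
    rw [ha]
    exact PairM.single a 0 hcast PairM.nil
  rcases hw2 with h1 | ⟨b, hb⟩
  · have h2 : Multiset.card (NZW z) ≤ 1 := le_trans hcard h1
    rcases Nat.eq_zero_or_pos (Multiset.card (NZW z)) with h0 | hpos
    · rw [Multiset.card_eq_zero.1 h0]
      exact PairM.nil
    · exact hsingle (by omega)
  · have hwc : Multiset.card (NZW w) = 2 := by rw [hb]; rfl
    rcases Nat.lt_or_ge (Multiset.card (NZW z)) 2 with hlt | hge
    · rcases Nat.eq_zero_or_pos (Multiset.card (NZW z)) with h0 | hpos
      · rw [Multiset.card_eq_zero.1 h0]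
        exact PairM.nil
      · exact hsingle (by omega)
    · have heq : NZW z = NZW w := Multiset.eq_of_le_of_card_le hle (by omega)
      rw [heq, hb]
      exact PairM.pair b (-b) 0 (by ring) PairM.nil

theorem nzw_shape (w : GW m n)
    (hcyc : GW.numCycles w = 1 ∨ (∃ C₁ C₂ : Finset (Fin n), C₁ ≠ C₂ ∧
      GW.cycles w = {C₁, C₂} ∧ GW.cycWt w C₁ ≠ 0 ∧ GW.cycWt w C₂ ≠ 0 ∧
      GW.cycWt w C₁ + GW.cycWt w C₂ = 0)) :
    Multiset.card (NZW w) ≤ 1 ∨ ∃ b : ZMod m, NZW w = b ::ₘ {-b} := by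
  rcases hcyc with h1 | ⟨C₁, C₂, hne, hcw, hw1, hw2, hsum⟩
  · left
    have h2 := Multiset.card_le_card (Multiset.filter_le (· ≠ (0 : ZMod m)) (W w))
    rw [card_W, h1] at h2
    exact h2
  · right
    refine ⟨GW.cycWt w C₁, ?_⟩
    have hval : (GW.cycles w).val = C₁ ::ₘ C₂ ::ₘ 0 := by
      rw [hcw]
      show (insert C₁ ({C₂} : Finset (Finset (Fin n)))).val = _
      rw [Finset.insert_val_of_notMem (by simp [hne])]
      rfl
    have hW : W w = GW.cycWt w C₁ ::ₘ GW.cycWt w C₂ ::ₘ 0 := by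
      rw [W, hval, Multiset.map_cons, Multiset.map_cons, Multiset.map_zero]
    have hneg : GW.cycWt w C₂ = -GW.cycWt w C₁ := eq_neg_of_add_eq_zero_right hsum
    rw [NZW, hW, Multiset.filter_cons_of_pos _ (by simpa using hw1),
      Multiset.filter_cons_of_pos _ (by simpa using hw2), Multiset.filter_zero, hneg]
    rfl

theorem nzw_le_left {u v : GW m n}
    (h : GW.codimfix (u * v) = GW.codimfix u + GW.codimfix v) : NZW u ≤ NZW (u * v) := by
  obtain ⟨l, hl, hlen, hprod⟩ := fact' (one_dvd m) v (pairM_one _ _)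
  have h2 : NZW u ≤ NZW (u * l.prod) := by
    apply chain_mono u l (fun t ht => (hl t ht).2)
    rw [hprod, hlen, h]
  rwa [hprod] at h2

theorem nzw_le_right {u v : GW m n}
    (h : GW.codimfix (u * v) = GW.codimfix u + GW.codimfix v) : NZW v ≤ NZW (u * v) := by
  have h' : GW.codimfix (v⁻¹ * u⁻¹) = GW.codimfix v⁻¹ + GW.codimfix u⁻¹ := by
    rw [← mul_inv_rev, codim_inv, codim_inv, codim_inv, h]
    omega
  have h2 := nzw_le_left h'
  rw [← mul_inv_rev, NZW_inv, NZW_inv] at h2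
  have h3 := Multiset.map_le_map (f := fun c : ZMod m => -c) h2
  rw [Multiset.map_map, Multiset.map_map] at h3
  simpa using h3

/-- Iterated `step_mul_ge`: codimfix of a product against a reflection list. -/
theorem chain_ge (x : GW m n) (l : List (GW m n)) (hl : ∀ t ∈ l, GW.codimfix t = 1) :
    GW.codimfix (x * l.prod) + l.length ≥ GW.codimfix x := by
  induction l generalizing x with
  | nil => simp
  | cons t l' ih =>
    have h1 : x * (t :: l').prod = (x * t) * l'.prod := by
      rw [List.prod_cons, mul_assoc]
    rw [h1]
    have h2 := ih (x * t) (fun u hu => hl u (List.mem_cons_of_mem _ hu))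
    have h3 := step_mul_ge (x := x) (hl t (List.mem_cons_self))
    simp only [List.length_cons]
    omega

end GWP


/-- Suppose `w ∈ G(m,p,n)` has a single cycle, or exactly two cycles whose weights are
nonzero and sum to `0` in `ℤ/mℤ`.  Then `[id, w]_{cdf} = [id, w]_{ℓ_R}`. -/
theorem stmt10 (m p n : ℕ) (hm : 0 < m) (hp : 0 < p) (hn : 0 < n) (hpm : p ∣ m)
    (w : GW m n) (hw : GW.Gmem p hpm w)
    (hcyc : GW.numCycles w = 1 ∨
      (∃ C₁ C₂ : Finset (Fin n), C₁ ≠ C₂ ∧ GW.cycles w = {C₁, C₂} ∧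
        GW.cycWt w C₁ ≠ 0 ∧ GW.cycWt w C₂ ≠ 0 ∧ GW.cycWt w C₁ + GW.cycWt w C₂ = 0)) :
    GW.interval p hpm GW.codimfix w = GW.interval p hpm (GW.lR p hpm) w := by
  apply Set.ext
  intro u
  simp only [GW.interval, GW.leF, Set.mem_setOf_eq]
  have hWshape := GWP.nzw_shape w hcyc
  have hpw : GWP.PairM p hpm (GWP.NZW w) := GWP.pairM_of_le hpm le_rfl hw hWshape
  have hlRw : GW.lR p hpm w = GW.codimfix w := GWP.lr_eq hw hpw
  have hGv : GW.Gmem p hpm (u⁻¹ * w) → True := fun _ => trivial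
  constructor
  · rintro ⟨hGu, hleF⟩
    refine ⟨hGu, ?_⟩
    have hGv : GW.Gmem p hpm (u⁻¹ * w) := GWP.Gmem_mul (GWP.Gmem_inv hGu) hw
    have huv : u * (u⁻¹ * w) = w := mul_inv_cancel_left u w
    have hcd : GW.codimfix (u * (u⁻¹ * w)) = GW.codimfix u + GW.codimfix (u⁻¹ * w) := by
      rw [huv]
      exact hleF.symm
    have hNu : GWP.NZW u ≤ GWP.NZW w := by
      have h := GWP.nzw_le_left hcd
      rwa [huv] at h
    have hNv : GWP.NZW (u⁻¹ * w) ≤ GWP.NZW w := by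
      have h := GWP.nzw_le_right hcd
      rwa [huv] at h
    have hpu := GWP.pairM_of_le hpm hNu hGu hWshape
    have hpv := GWP.pairM_of_le hpm hNv hGv hWshape
    rw [GWP.lr_eq hGu hpu, GWP.lr_eq hGv hpv, hlRw]
    exact hleF
  · rintro ⟨hGu, hleF⟩
    refine ⟨hGu, ?_⟩
    have hGv : GW.Gmem p hpm (u⁻¹ * w) := GWP.Gmem_mul (GWP.Gmem_inv hGu) hw
    have huv : u * (u⁻¹ * w) = w := mul_inv_cancel_left u w
    have h1 : GW.codimfix u ≤ GW.lR p hpm u := GWP.lr_ge hGu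
    have h2 : GW.codimfix (u⁻¹ * w) ≤ GW.lR p hpm (u⁻¹ * w) := GWP.lr_ge hGv
    obtain ⟨lu, hlur, hlulen, hluprod⟩ := GWP.lr_mem hGu
    obtain ⟨lv, hlvr, hlvlen, hlvprod⟩ := GWP.lr_mem hGv
    have h3 : GW.codimfix w ≤ GW.codimfix u + GW.lR p hpm (u⁻¹ * w) := by
      have h := GWP.chain_le u lv (fun t ht => (hlvr t ht).2)
      rw [hlvprod, huv, hlvlen] at h
      exact h
    have h4 : GW.codimfix w ≤ GW.lR p hpm u + GW.codimfix (u⁻¹ * w) := by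
      set lui := (lu.map (fun t => t⁻¹)).reverse with hlui
      have hluir : ∀ t ∈ lui, GW.codimfix t = 1 := by
        intro t ht
        rw [hlui, List.mem_reverse] at ht
        obtain ⟨s', hs', rfl⟩ := List.mem_map.1 ht
        rw [GWP.codim_inv]
        exact (hlur s' hs').2
      have hprod : lui.prod = u⁻¹ := by
        rw [hlui, ← List.prod_inv_reverse, hluprod]
      have e : (u⁻¹ * w)⁻¹ * u⁻¹ = w⁻¹ := by rw [← mul_inv_rev, huv]
      have h5 := GWP.chain_le ((u⁻¹ * w)⁻¹) lui hluir
      rw [hprod, e, GWP.codim_inv, GWP.codim_inv] at h5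
      have hlen : lui.length = GW.lR p hpm u := by
        rw [hlui, List.length_reverse, List.length_map, hlulen]
      omega
    have h6 := hleF
    rw [hlRw] at h6
    omega
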